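/- arXiv:2202.11659 — 7 statements merged into one kernel-verified Lean document; each statement's English description precedes it below -/
import Mathlib

section
/- Let f : ℝ^d → ℝ be differentiable with inf_{x ∈ ℝ^d} f(x) finite. Suppose there exists a differentiable map Ψ : ℝ^{n_ν} → ℝ^d such that (i) Ψ is surjective and (ii) the composition f_cvx(ν) := f(Ψ(ν)) is convex on ℝ^{n_ν}. Then every first-order stationary point of f is globally optimal: for every x ∈ ℝ^d with ∇f(x) = 0 one has f(x) = inf_{x' ∈ ℝ^d} f(x'). -/
/-- If `f : ℝ^d → ℝ` is differentiable and bounded below, and there is a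
differentiable surjection `Ψ : ℝ^{nν} → ℝ^d` such that `f ∘ Ψ` is convex, then every
first-order stationary point of `f` is a global minimizer. -/
theorem stmt_0 {d nν : ℕ} (f : EuclideanSpace ℝ (Fin d) → ℝ)
    (hf : Differentiable ℝ f) (hbdd : BddBelow (Set.range f))
    (Ψ : EuclideanSpace ℝ (Fin nν) → EuclideanSpace ℝ (Fin d))
    (hΨ : Differentiable ℝ Ψ) (hΨsurj : Function.Surjective Ψ)
    (hconv : ConvexOn ℝ Set.univ (f ∘ Ψ)) :
    ∀ x : EuclideanSpace ℝ (Fin d), fderiv ℝ f x = 0 → f x = ⨅ x', f x' := by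
  intro x hx
  have key : ∀ x', f x ≤ f x' := by
    intro x'
    obtain ⟨ν, hν⟩ := hΨsurj x
    obtain ⟨μ, hμ⟩ := hΨsurj x'
    subst hν hμ
    set g : EuclideanSpace ℝ (Fin nν) → ℝ := f ∘ Ψ with hg
    -- g has derivative 0 at ν
    have hgd : HasFDerivAt g (0 : EuclideanSpace ℝ (Fin nν) →L[ℝ] ℝ) ν := by
      have := (hf (Ψ ν)).hasFDerivAt.comp ν (hΨ ν).hasFDerivAt
      rwa [hx, ContinuousLinearMap.zero_comp] at this
    -- the line function
    set h : ℝ → ℝ := fun t => g (ν + t • (μ - ν)) with hh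
    have hL : HasDerivAt (fun t : ℝ => ν + t • (μ - ν)) (μ - ν) 0 := by
      simpa using ((hasDerivAt_id (0:ℝ)).smul_const (μ - ν)).const_add ν
    have hgd' : HasFDerivAt g (0 : EuclideanSpace ℝ (Fin nν) →L[ℝ] ℝ)
        (ν + (0:ℝ) • (μ - ν)) := by simpa using hgd
    have hhd : HasDerivAt h 0 0 := by
      have := hgd'.comp_hasDerivAt (x := (0:ℝ)) hL
      exact (by simpa using this : HasDerivAt (g ∘ fun t : ℝ => ν + t • (μ - ν)) 0 0)
    set c := g μ - g ν with hc
    have slope_le : ∀ t ∈ Set.Ioc (0:ℝ) 1, t⁻¹ * (h (0 + t) - h 0) ≤ c := by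
      intro t ht
      have hconvt := hconv.2 (Set.mem_univ ν) (Set.mem_univ μ)
        (by linarith [ht.2] : (0:ℝ) ≤ 1 - t) (le_of_lt ht.1) (by ring)
      have hpt : (1 - t) • ν + t • μ = ν + t • (μ - ν) := by
        module
      rw [hpt] at hconvt
      have hht : h t ≤ h 0 + t * c := by
        simp only [hh, hc]
        have h0 : ν + (0:ℝ) • (μ - ν) = ν := by simp
        calc g (ν + t • (μ - ν)) ≤ (1 - t) * g ν + t * g μ := hconvt
          _ = g ν + t * (g μ - g ν) := by ring
          _ = g (ν + (0:ℝ) • (μ - ν)) + t * (g μ - g ν) := by rw [h0]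
      have h1 : h t - h 0 ≤ t * c := by linarith
      rw [zero_add, inv_mul_le_iff₀ ht.1]
      linarith
    have htend := hhd.tendsto_slope_zero_right
    have h0c : (0:ℝ) ≤ c := by
      refine le_of_tendsto htend ?_
      filter_upwards [Ioc_mem_nhdsGT_of_mem (by norm_num : (0:ℝ) ∈ Set.Ico 0 1)] with t ht
      exact slope_le t ht
    have : g ν ≤ g μ := by linarith
    exact this
  exact le_antisymm (le_ciInf key) (ciInf_le hbdd x)
end

section
/- Let f : ℝ^d → ℝ, let D_lft ⊆ ℝ^d × ℝ^m, and let f_lft : ℝ^d × ℝ^m → ℝ satisfy f(x') ≤ f_lft(x', ξ') for every (x', ξ') ∈ D_lft. Let x ∈ ℝ^d be a point at which f is Fréchet differentiable, and let ξ ∈ ℝ^m be such that (x, ξ) ∈ D_lft and f_lft(x, ξ) = f(x). Suppose there exist ε₀ > 0 and a continuously differentiable curve φ : [0, ε₀] → ℝ^d × ℝ^m with φ(ε) ∈ D_lft for all ε ∈ [0, ε₀], φ(0) = (x, ξ), and limsup_{ε → 0⁺} (f_lft(φ(ε)) − f_lft(x, ξ)) / ε ≤ −‖φ'(0)‖². Then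 ‖∇f(x)‖ ≥ ‖φ'(0)‖. -/
open Filter

set_option maxHeartbeats 2000000
set_option synthInstance.maxHeartbeats 4000000

/-- If `f` arises by partial minimization from a lifted function `f_lft`
(with the minimum attained at `ξ`), `f` is differentiable at `x`, and `φ` is a `C¹` curve in
the lifted domain starting at `(x, ξ)` along which `f_lft` decreases at rate at least
`‖φ'(0)‖²`, then `‖∇f(x)‖ ≥ ‖φ'(0)‖`. -/
theorem stmt_3 {d m : ℕ}
    (f : EuclideanSpace ℝ (Fin d) → ℝ)
    (Dlft : Set (WithLp 2 (EuclideanSpace ℝ (Fin d) × EuclideanSpace ℝ (Fin m))))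
    (flft : WithLp 2 (EuclideanSpace ℝ (Fin d) × EuclideanSpace ℝ (Fin m)) → ℝ)
    (hlb : ∀ y ∈ Dlft,
      f ((WithLp.equiv 2 (EuclideanSpace ℝ (Fin d) × EuclideanSpace ℝ (Fin m)) y).1) ≤ flft y)
    (x : EuclideanSpace ℝ (Fin d)) (hfd : DifferentiableAt ℝ f x)
    (ξ : EuclideanSpace ℝ (Fin m))
    (hmem : (WithLp.equiv 2 (EuclideanSpace ℝ (Fin d) × EuclideanSpace ℝ (Fin m))).symm (x, ξ)
      ∈ Dlft)
    (heq : flft ((WithLp.equiv 2 (EuclideanSpace ℝ (Fin d) × EuclideanSpace ℝ (Fin m))).symm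
      (x, ξ)) = f x)
    (ε₀ : ℝ) (hε₀ : 0 < ε₀)
    (φ : ℝ → WithLp 2 (EuclideanSpace ℝ (Fin d) × EuclideanSpace ℝ (Fin m)))
    (hφC1 : ContDiffOn ℝ 1 φ (Set.Icc 0 ε₀))
    (hφmem : ∀ ε ∈ Set.Icc (0:ℝ) ε₀, φ ε ∈ Dlft)
    (hφ0 : φ 0 = (WithLp.equiv 2 (EuclideanSpace ℝ (Fin d) × EuclideanSpace ℝ (Fin m))).symm
      (x, ξ))
    (g : WithLp 2 (EuclideanSpace ℝ (Fin d) × EuclideanSpace ℝ (Fin m)))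
    (hg : HasDerivWithinAt φ g (Set.Icc 0 ε₀) 0)
    (hlimsup : Filter.limsup
        (fun ε : ℝ => (flft (φ ε) -
          flft ((WithLp.equiv 2 (EuclideanSpace ℝ (Fin d) × EuclideanSpace ℝ (Fin m))).symm
            (x, ξ))) / ε)
        (nhdsWithin 0 (Set.Ioi 0)) ≤ -‖g‖ ^ 2) :
    ‖g‖ ≤ ‖fderiv ℝ f x‖ := by
  by_cases hg0 : g = 0
  · simp [hg0]
  have hgn : (0:ℝ) < ‖g‖ := norm_pos_iff.mpr hg0
  set L : WithLp 2 (EuclideanSpace ℝ (Fin d) × EuclideanSpace ℝ (Fin m))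
      →L[ℝ] EuclideanSpace ℝ (Fin d) :=
    (ContinuousLinearMap.fst ℝ (EuclideanSpace ℝ (Fin d)) (EuclideanSpace ℝ (Fin m))).comp
      ((WithLp.prodContinuousLinearEquiv 2 ℝ (EuclideanSpace ℝ (Fin d))
        (EuclideanSpace ℝ (Fin m))) :
        WithLp 2 (EuclideanSpace ℝ (Fin d) × EuclideanSpace ℝ (Fin m))
          →L[ℝ] EuclideanSpace ℝ (Fin d) × EuclideanSpace ℝ (Fin m)) with hL
  set ψ : ℝ → ℝ := fun ε => f (L (φ ε)) with hψ
  have hx1 : HasDerivWithinAt (fun ε => L (φ ε)) (L g) (Set.Icc 0 ε₀) 0 :=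
    L.hasFDerivAt.comp_hasDerivWithinAt 0 hg
  have hx10 : L (φ 0) = x := by rw [hφ0]; rfl
  have hfd' : HasFDerivAt f (fderiv ℝ f x) (L (φ 0)) := by rw [hx10]; exact hfd.hasFDerivAt
  set D : ℝ := fderiv ℝ f x (L g) with hD
  have hψd : HasDerivWithinAt ψ D (Set.Icc 0 ε₀) 0 :=
    hfd'.comp_hasDerivWithinAt 0 hx1
  have hslope : Tendsto (slope ψ 0) (nhdsWithin 0 (Set.Ioi 0)) (nhds D) := by
    have h1 := hasDerivWithinAt_iff_tendsto_slope.mp hψd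
    refine h1.mono_left ?_
    rw [← nhdsWithin_Ioo_eq_nhdsGT hε₀]
    exact nhdsWithin_mono 0 (fun t ht => ⟨⟨le_of_lt ht.1, le_of_lt ht.2⟩, ne_of_gt ht.1⟩)
  set q : ℝ → ℝ := fun ε : ℝ => (flft (φ ε) -
          flft ((WithLp.equiv 2 (EuclideanSpace ℝ (Fin d) × EuclideanSpace ℝ (Fin m))).symm
            (x, ξ))) / ε with hq
  have hev : ∀ᶠ ε in nhdsWithin 0 (Set.Ioi 0), slope ψ 0 ε ≤ q ε := by
    filter_upwards [Ioo_mem_nhdsGT_of_mem (Set.left_mem_Ico.2 hε₀)] with ε hε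
    have hεI : ε ∈ Set.Icc (0:ℝ) ε₀ := ⟨le_of_lt hε.1, le_of_lt hε.2⟩
    have h1 : f (L (φ ε)) ≤ flft (φ ε) := hlb _ (hφmem ε hεI)
    have hψ0 : ψ 0 = f x := by rw [hψ]; simp only; rw [hx10]
    rw [slope_def_field, hψ0]
    simp only [hψ, hq, heq]
    rw [sub_zero, div_le_div_iff₀ hε.1 hε.1]
    nlinarith [hε.1]
  have hqbdd : IsBoundedUnder (· ≤ ·) (nhdsWithin 0 (Set.Ioi 0)) q := by
    by_contra hb
    have h0 : {a : ℝ | ∀ᶠ n in map q (nhdsWithin 0 (Set.Ioi 0)), n ≤ a} = ∅ := by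
      rw [Set.eq_empty_iff_forall_notMem]
      intro a ha
      exact hb ⟨a, ha⟩
    have : limsup q (nhdsWithin 0 (Set.Ioi 0)) = 0 := by
      rw [limsup, limsSup, h0, Real.sInf_empty]
    rw [hq] at this
    rw [this] at hlimsup
    nlinarith
  have hDle : D ≤ -‖g‖ ^ 2 := by
    refine le_of_forall_gt_imp_ge_of_dense fun c hc => ?_
    have h1 : ∀ᶠ ε in nhdsWithin 0 (Set.Ioi 0), q ε < c := by
      refine eventually_lt_of_limsup_lt ?_ hqbdd
      exact lt_of_le_of_lt hlimsup hc
    have h2 : ∀ᶠ ε in nhdsWithin 0 (Set.Ioi 0), slope ψ 0 ε ≤ c := by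
      filter_upwards [h1, hev] with ε h1 h2; linarith
    exact le_of_tendsto hslope h2
  have hnorm1 : ‖L g‖ ≤ ‖g‖ := by
    have h2 := WithLp.prod_norm_sq_eq_of_L2 g
    have h3 : L g = g.fst := rfl
    rw [h3]
    nlinarith [norm_nonneg g.fst, norm_nonneg g.snd, norm_nonneg g]
  have hDb : -D ≤ ‖fderiv ℝ f x‖ * ‖g‖ := by
    have h4 : |D| ≤ ‖fderiv ℝ f x‖ * ‖L g‖ := by
      rw [hD, ← Real.norm_eq_abs]
      exact (fderiv ℝ f x).le_opNorm (L g)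
    have h5 : -D ≤ |D| := neg_le_abs D
    have h6 := mul_le_mul_of_nonneg_left hnorm1 (norm_nonneg (fderiv ℝ f x))
    linarith
  have h7 : ‖g‖ ^ 2 ≤ ‖fderiv ℝ f x‖ * ‖g‖ := by linarith
  nlinarith
end

section
/- Let f : ℝ^d → ℝ be bounded below, let x₀ ∈ ℝ^d, and suppose the sublevel set K := {x : f(x) ≤ f(x₀)} is compact. Assume f is twice continuously differentiable on an open set containing K; that for all x ∈ K and all v ∈ ℝ^d the Hessian satisfies ⟨v, ∇²f(x) v⟩ ≤ β‖v‖² (β-upper-smoothness on K); and that ‖∇f(x)‖ ≥ α (f(x) − inf f) for all x ∈ K (α-weak-PL on K), where α, β > 0 and inf f := inf_{x ∈ ℝ^d} f(x). Then for any step size 0 < η ≤ 1/β, the gradient descent iterates x_{k+1} = x_k − η ∇f(x_k) started at x₀ satisfy f(x_k) − inf f ≤ 2 / (k α² η) for all k ≥ 1. -/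
open Set

/-- One-step descent lemma for gradient descent on a function that is `C²` on an open
neighborhood of the (closed) sublevel set of `x₀`, with Hessian bounded by `β` there. -/
lemma gd_descent {E : Type*} [NormedAddCommGroup E] [InnerProductSpace ℝ E] [CompleteSpace E]
    (f : E → ℝ) (x₀ : E) (U : Set E) (hUopen : IsOpen U)
    (hKU : {x | f x ≤ f x₀} ⊆ U) (hKclosed : IsClosed {x | f x ≤ f x₀})
    (hfC2 : ContDiffOn ℝ 2 f U) (β : ℝ) (hβ : 0 < β)
    (hsmooth : ∀ x ∈ {x | f x ≤ f x₀}, ∀ v : E, fderiv ℝ (fderiv ℝ f) x v v ≤ β * ‖v‖ ^ 2)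
    (η : ℝ) (hη0 : 0 < η) (hηβ : η * β ≤ 1)
    (x : E) (hx : f x ≤ f x₀) :
    f (x - η • gradient f x) ≤ f x - (η / 2) * ‖gradient f x‖ ^ 2 := by
  set g := gradient f x with hgdef
  by_cases hg0 : g = 0
  · simp [hg0]
  set v : E := (-η) • g with hvdef
  set γ : ℝ → E := fun t => x + t • v with hγdef
  set φ : ℝ → ℝ := fun t => f (γ t) with hφdef
  set ψ : ℝ → ℝ := fun t => fderiv ℝ f (γ t) v with hψdef
  have hγcont : Continuous γ := by
    apply continuous_const.add (continuous_id.smul continuous_const)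
  have hγ : ∀ t : ℝ, HasDerivAt γ v t := by
    intro t
    exact (((hasDerivAt_id t).smul_const v).const_add x).congr_deriv (one_smul ℝ v)
  have hdiffU : ∀ y ∈ U, DifferentiableAt ℝ f y := fun y hy =>
    (hfC2.differentiableOn (by norm_num)).differentiableAt (hUopen.mem_nhds hy)
  have hdf1 : ContDiffOn ℝ 1 (fderiv ℝ f) U := hfC2.fderiv_of_isOpen hUopen (by norm_num)
  have hdfU : ∀ y ∈ U, DifferentiableAt ℝ (fderiv ℝ f) y := fun y hy =>
    (hdf1.differentiableOn (by norm_num)).differentiableAt (hUopen.mem_nhds hy)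
  have hφ' : ∀ t : ℝ, γ t ∈ U → HasDerivAt φ (ψ t) t := fun t ht =>
    (hdiffU _ ht).hasFDerivAt.comp_hasDerivAt t (hγ t)
  have hψ' : ∀ t : ℝ, γ t ∈ U → HasDerivAt ψ (fderiv ℝ (fderiv ℝ f) (γ t) v v) t := by
    intro t ht
    have h1 : HasDerivAt (fun s => fderiv ℝ f (γ s)) (fderiv ℝ (fderiv ℝ f) (γ t) v) t :=
      (hdfU _ ht).hasFDerivAt.comp_hasDerivAt t (hγ t)
    have h2 := ((ContinuousLinearMap.apply ℝ ℝ v).hasFDerivAt).comp_hasDerivAt t h1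
    simpa [Function.comp_def, hψdef] using h2
  have hxU : x ∈ U := hKU hx
  have hγ0 : γ 0 = x := by simp [hγdef]
  have hφ0 : φ 0 = f x := by rw [hφdef]; simp [hγ0]
  have hψ0 : ψ 0 = -(η * ‖g‖ ^ 2) := by
    have hgr := (hdiffU x hxU).hasGradientAt
    rw [hasGradientAt_iff_hasFDerivAt] at hgr
    have : fderiv ℝ f x = InnerProductSpace.toDual ℝ E g := hgr.fderiv
    rw [hψdef]
    simp only [hγ0, this, InnerProductSpace.toDual_apply_apply, hvdef]
    rw [real_inner_smul_right, real_inner_self_eq_norm_sq]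
    ring
  have hvnorm : ‖v‖ ^ 2 = η ^ 2 * ‖g‖ ^ 2 := by
    rw [hvdef, norm_smul]
    rw [norm_neg, Real.norm_eq_abs, abs_of_pos hη0]
    ring
  -- key bound on ψ on intervals whose image stays in the sublevel set
  have hψbound : ∀ T ∈ Icc (0:ℝ) 1, (∀ s ∈ Icc (0:ℝ) T, f (γ s) ≤ f x₀) →
      ∀ t ∈ Icc (0:ℝ) T, ψ t ≤ -((1 - t) * (η * ‖g‖ ^ 2)) := by
    intro T hT hTK t ht
    have hUmem : ∀ s ∈ Icc (0:ℝ) T, γ s ∈ U := fun s hs => hKU (hTK s hs)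
    have hχ : AntitoneOn (fun s => ψ s - β * ‖v‖ ^ 2 * s) (Icc 0 T) := by
      have hD : ∀ s ∈ Icc (0:ℝ) T,
          HasDerivAt (fun s => ψ s - β * ‖v‖ ^ 2 * s)
            (fderiv ℝ (fderiv ℝ f) (γ s) v v - β * ‖v‖ ^ 2) s := by
        intro s hs
        have h1 := hψ' s (hUmem s hs)
        have h2 : HasDerivAt (fun s : ℝ => β * ‖v‖ ^ 2 * s) (β * ‖v‖ ^ 2) s := by
          simpa using (hasDerivAt_id s).const_mul (β * ‖v‖ ^ 2)
        exact h1.sub h2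
      apply antitoneOn_of_deriv_nonpos (convex_Icc 0 T)
      · exact fun s hs => (hD s hs).continuousAt.continuousWithinAt
      · intro s hs
        exact ((hD s (interior_subset hs)).differentiableAt).differentiableWithinAt
      · intro s hs
        rw [(hD s (interior_subset hs)).deriv]
        have := hsmooth (γ s) (hTK s (interior_subset hs)) v
        linarith
    have h1 := hχ ⟨le_refl (0:ℝ), ht.1.trans ht.2⟩ ht ht.1
    -- h1 : ψ t - β‖v‖² t ≤ ψ 0 - β‖v‖² * 0
    have hβt : β * ‖v‖ ^ 2 * t ≤ t * (η * ‖g‖ ^ 2) := by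
      rw [hvnorm]
      have hgsq : (0:ℝ) ≤ ‖g‖ ^ 2 := sq_nonneg _
      nlinarith [ht.1, mul_nonneg ht.1 (mul_nonneg hη0.le hgsq)]
    simp only [mul_zero, sub_zero] at h1
    rw [hψ0] at h1
    nlinarith
  -- continuous induction: the whole segment stays in the sublevel set
  set S : Set ℝ := {T ∈ Icc (0:ℝ) 1 | ∀ s ∈ Icc (0:ℝ) T, φ s ≤ φ 0} with hSdef
  have h0S : (0:ℝ) ∈ S := by
    refine ⟨left_mem_Icc.2 zero_le_one, ?_⟩
    intro s hs
    rw [show s = 0 from le_antisymm hs.2 hs.1]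
  have hSbdd : BddAbove S := ⟨1, fun t ht => ht.1.2⟩
  have hSne : S.Nonempty := ⟨0, h0S⟩
  set T := sSup S with hTdef
  have hT0 : 0 ≤ T := le_csSup hSbdd h0S
  have hT1 : T ≤ 1 := csSup_le hSne fun t ht => ht.1.2
  have hlt : ∀ s, 0 ≤ s → s < T → φ s ≤ φ 0 := by
    intro s hs0 hsT
    obtain ⟨t, htS, hst⟩ := exists_lt_of_lt_csSup hSne hsT
    exact htS.2 s ⟨hs0, hst.le⟩
  have hKlt : ∀ s, 0 ≤ s → s < T → f (γ s) ≤ f x₀ := by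
    intro s hs0 hsT
    have := hlt s hs0 hsT
    rw [hφ0] at this
    exact this.trans hx
  have hγTK : f (γ T) ≤ f x₀ ∧ φ T ≤ φ 0 := by
    rcases eq_or_lt_of_le hT0 with h0T | h0T
    · constructor
      · rw [← h0T, hγ0]; exact hx
      · rw [← h0T]
    · have hmemIoo : Ioo (0:ℝ) T ∈ nhdsWithin T (Iio T) :=
        Ioo_mem_nhdsLT_of_mem ⟨h0T, le_refl T⟩
      have htdγ : Filter.Tendsto γ (nhdsWithin T (Iio T)) (nhds (γ T)) :=
        (hγcont.tendsto T).mono_left nhdsWithin_le_nhds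
      have hγTmem : γ T ∈ {x | f x ≤ f x₀} := by
        apply hKclosed.mem_of_tendsto htdγ
        filter_upwards [hmemIoo] with s hs
        exact hKlt s hs.1.le hs.2
      refine ⟨hγTmem, ?_⟩
      have hφcont : ContinuousAt φ T := by
        have hfc : ContinuousAt f (γ T) :=
          (hfC2.continuousOn.continuousAt (hUopen.mem_nhds (hKU hγTmem)))
        exact hfc.comp hγcont.continuousAt
      have htdφ : Filter.Tendsto φ (nhdsWithin T (Iio T)) (nhds (φ T)) :=
        (hφcont.tendsto).mono_left nhdsWithin_le_nhds
      apply le_of_tendsto htdφ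
      filter_upwards [hmemIoo] with s hs
      exact hlt s hs.1.le hs.2
  have hTK : ∀ s ∈ Icc (0:ℝ) T, f (γ s) ≤ f x₀ := by
    intro s hs
    rcases eq_or_lt_of_le hs.2 with h | h
    · rw [h]; exact hγTK.1
    · exact hKlt s hs.1 h
  have hTle : ∀ s ∈ Icc (0:ℝ) T, φ s ≤ φ 0 := by
    intro s hs
    rcases eq_or_lt_of_le hs.2 with h | h
    · rw [h]; exact hγTK.2
    · exact hlt s hs.1 h
  -- show T = 1
  have hTeq : T = 1 := by
    by_contra hne
    have hTlt1 : T < 1 := lt_of_le_of_ne hT1 hne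
    have hγTU : γ T ∈ U := hKU hγTK.1
    have hψTneg : ψ T < 0 := by
      have := hψbound T ⟨hT0, hT1⟩ hTK T ⟨hT0, le_refl T⟩
      have hpos : 0 < (1 - T) * (η * ‖g‖ ^ 2) := by
        apply mul_pos (by linarith) (mul_pos hη0 _)
        have : 0 < ‖g‖ := norm_pos_iff.2 hg0
        positivity
      linarith
    have hψcont : ContinuousAt ψ T := (hψ' T hγTU).continuousAt
    have hev : ∀ᶠ u in nhds T, ψ u < 0 ∧ γ u ∈ U := by
      have h1 : ∀ᶠ u in nhds T, ψ u < 0 :=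
        hψcont.eventually_lt continuousAt_const hψTneg
      have h2 : ∀ᶠ u in nhds T, γ u ∈ U :=
        hγcont.continuousAt.preimage_mem_nhds (hUopen.mem_nhds hγTU)
      exact h1.and h2
    rw [Metric.eventually_nhds_iff] at hev
    obtain ⟨ε, hε, hevb⟩ := hev
    set t' := min (T + ε / 2) 1 with ht'def
    have hTt' : T < t' := lt_min (by linarith) hTlt1
    have ht'1 : t' ≤ 1 := min_le_right _ _
    have hnear : ∀ u ∈ Icc T t', ψ u < 0 ∧ γ u ∈ U := by
      intro u hu
      apply hevb
      rw [Real.dist_eq, abs_lt]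
      constructor
      · linarith [hu.1]
      · have : u ≤ T + ε / 2 := hu.2.trans (min_le_left _ _)
        linarith
    have hφanti : AntitoneOn φ (Icc T t') := by
      apply antitoneOn_of_deriv_nonpos (convex_Icc T t')
      · exact fun s hs => (hφ' s (hnear s hs).2).continuousAt.continuousWithinAt
      · exact fun s hs =>
          ((hφ' s (hnear s (interior_subset hs)).2).differentiableAt).differentiableWithinAt
      · intro s hs
        rw [(hφ' s (hnear s (interior_subset hs)).2).deriv]
        exact (hnear s (interior_subset hs)).1.le
    have ht'S : t' ∈ S := by
      refine ⟨⟨hT0.trans hTt'.le, ht'1⟩, ?_⟩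
      intro s hs
      rcases le_or_gt s T with h | h
      · exact hTle s ⟨hs.1, h⟩
      · calc φ s ≤ φ T := hφanti ⟨le_refl T, hTt'.le⟩ ⟨h.le, hs.2⟩ h.le
          _ ≤ φ 0 := hγTK.2
    have := le_csSup hSbdd ht'S
    rw [← hTdef] at this
    linarith
  -- final descent estimate via an antitone auxiliary function on [0,1]
  have hallK : ∀ s ∈ Icc (0:ℝ) 1, f (γ s) ≤ f x₀ := by rw [← hTeq]; exact hTK
  have hψle := hψbound 1 ⟨zero_le_one, le_refl 1⟩ hallK
  have hω : AntitoneOn (fun t => φ t + (t - t ^ 2 / 2) * (η * ‖g‖ ^ 2)) (Icc 0 1) := by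
    have hD : ∀ s ∈ Icc (0:ℝ) 1,
        HasDerivAt (fun t => φ t + (t - t ^ 2 / 2) * (η * ‖g‖ ^ 2))
          (ψ s + (1 - s) * (η * ‖g‖ ^ 2)) s := by
      intro s hs
      have h1 := hφ' s (hKU (hallK s hs))
      have h2 : HasDerivAt (fun t : ℝ => (t - t ^ 2 / 2) * (η * ‖g‖ ^ 2))
          ((1 - s) * (η * ‖g‖ ^ 2)) s := by
        have h3 : HasDerivAt (fun t : ℝ => t - t ^ 2 / 2) (1 - s) s := by
          have := ((hasDerivAt_pow 2 s).div_const 2)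
          exact ((hasDerivAt_id' s).sub this).congr_deriv (by norm_num)
        exact h3.mul_const _
      exact h1.add h2
    apply antitoneOn_of_deriv_nonpos (convex_Icc 0 1)
    · exact fun s hs => (hD s hs).continuousAt.continuousWithinAt
    · exact fun s hs => ((hD s (interior_subset hs)).differentiableAt).differentiableWithinAt
    · intro s hs
      rw [(hD s (interior_subset hs)).deriv]
      have := hψle s (interior_subset hs)
      linarith
  have hfin := hω (left_mem_Icc.2 zero_le_one) (right_mem_Icc.2 zero_le_one) zero_le_one
  simp only [one_pow] at hfin
  have hγ1 : γ 1 = x - η • g := by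
    rw [hγdef]
    simp [hvdef, sub_eq_add_neg, neg_smul]
  have hφ1 : φ 1 = f (x - η • g) := by rw [hφdef]; simp [hγ1]
  rw [hφ1, hφ0] at hfin
  nlinarith [hfin]

/-- Gradient descent on a β-upper-smooth function satisfying the α-weak-PL
condition on a compact sublevel set converges at rate `O(1/k)` to the infimum. -/
theorem stmt_4 {d : ℕ} (f : EuclideanSpace ℝ (Fin d) → ℝ)
    (hbdd : BddBelow (Set.range f))
    (x₀ : EuclideanSpace ℝ (Fin d))
    (hKcompact : IsCompact {x | f x ≤ f x₀})
    (U : Set (EuclideanSpace ℝ (Fin d))) (hUopen : IsOpen U)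
    (hKU : {x | f x ≤ f x₀} ⊆ U) (hfC2 : ContDiffOn ℝ 2 f U)
    (α β : ℝ) (hα : 0 < α) (hβ : 0 < β)
    (hsmooth : ∀ x ∈ {x | f x ≤ f x₀}, ∀ v : EuclideanSpace ℝ (Fin d),
      fderiv ℝ (fderiv ℝ f) x v v ≤ β * ‖v‖ ^ 2)
    (hPL : ∀ x ∈ {x | f x ≤ f x₀},
      α * (f x - sInf (Set.range f)) ≤ ‖gradient f x‖)
    (η : ℝ) (hη0 : 0 < η) (hηβ : η ≤ 1 / β)
    (x : ℕ → EuclideanSpace ℝ (Fin d)) (hx0 : x 0 = x₀)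
    (hiter : ∀ k : ℕ, x (k + 1) = x k - η • gradient f (x k)) :
    ∀ k : ℕ, 1 ≤ k → f (x k) - sInf (Set.range f) ≤ 2 / (k * α ^ 2 * η) := by
  have hm : ∀ y, sInf (Set.range f) ≤ f y := fun y => csInf_le hbdd ⟨y, rfl⟩
  set m := sInf (Set.range f) with hmdef
  have hηβ' : η * β ≤ 1 := by
    rw [le_div_iff₀ hβ] at hηβ; exact hηβ
  have hdesc := gd_descent f x₀ U hUopen hKU hKcompact.isClosed hfC2 β hβ hsmooth η hη0 hηβ'
  have hK : ∀ k, f (x k) ≤ f x₀ := by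
    intro k
    induction k with
    | zero => rw [hx0]
    | succ k ih =>
      have h := hdesc (x k) ih
      rw [← hiter k] at h
      have : (0:ℝ) ≤ (η / 2) * ‖gradient f (x k)‖ ^ 2 := by positivity
      linarith
  have hc : 0 < η * α ^ 2 / 2 := by positivity
  have hrec : ∀ k, f (x (k + 1)) - m ≤
      (f (x k) - m) - (η * α ^ 2 / 2) * (f (x k) - m) ^ 2 := by
    intro k
    have h := hdesc (x k) (hK k)
    rw [← hiter k] at h
    have hpl := hPL (x k) (hK k)
    have hΔ : 0 ≤ f (x k) - m := by linarith [hm (x k)]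
    have hsq : (α * (f (x k) - m)) ^ 2 ≤ ‖gradient f (x k)‖ ^ 2 := by
      apply sq_le_sq' _ hpl
      nlinarith [norm_nonneg (gradient f (x k))]
    nlinarith
  have hΔ0 : ∀ k, 0 ≤ f (x k) - m := fun k => by linarith [hm (x k)]
  have key : ∀ k : ℕ, 1 ≤ k → (η * α ^ 2 / 2) * k * (f (x k) - m) ≤ 1 := by
    intro k hk
    induction k, hk using Nat.le_induction with
    | base =>
      have h := hrec 0
      have h0 := hΔ0 0
      have h1 := hΔ0 1
      push_cast
      nlinarith [sq_nonneg (2 * (η * α ^ 2 / 2) * (f (x 0) - m) - 1),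
        mul_le_mul_of_nonneg_left h hc.le]
    | succ k hk ih =>
      have hΔn := hΔ0 k
      have hΔ'n := hΔ0 (k + 1)
      have hr := hrec k
      have hk1 : (1:ℝ) ≤ (k:ℝ) := by exact_mod_cast hk
      have hcd1 : (η * α ^ 2 / 2) * (f (x k) - m) ≤ 1 := by
        push_cast at ih
        nlinarith [mul_nonneg (mul_nonneg hc.le hΔn) (sub_nonneg.2 hk1)]
      push_cast
      push_cast at ih
      nlinarith [mul_le_mul_of_nonneg_left hr
          (show (0:ℝ) ≤ (η * α ^ 2 / 2) * ((k:ℝ) + 1) by positivity),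
        mul_nonneg (sub_nonneg.2 ih) (sub_nonneg.2 hcd1),
        sq_nonneg ((η * α ^ 2 / 2) * (f (x k) - m))]
  intro k hk
  have hkr : (1:ℝ) ≤ (k:ℝ) := by exact_mod_cast hk
  have hkpos : (0:ℝ) < (k:ℝ) := by linarith
  rw [le_div_iff₀ (by positivity)]
  nlinarith [key k hk]
end

section
/- Let f : ℝ^d → ℝ be bounded below with inf f := inf_{x∈ℝ^d} f(x), let x₀ ∈ ℝ^d, let n ∈ ℕ, and let Λ : ℝ^d → Sym(n) be a map taking values in symmetric positive semidefinite n×n real matrices. Define the reconditioned level set K := {x ∈ ℝ^d : f(x) ≤ f(x₀) and ‖Λ(x) − I_n‖ ≤ 1/2}, and assume K is closed. Assume: Λ is L_cond-Lipschitz from (ℝ^d, Euclidean norm) to (Sym(n), operator norm); f is twice continuously differentiable on an open set containing K with ⟨v, ∇²f(x)v⟩ ≤ β‖v‖² for all x ∈ K, v ∈ ℝ^d; f is L_f-Lipschitz on K; and ‖∇f(x)‖ ≥ α(f(x) − inf f) for all x ∈ K, where α, β, L_f, L_cond > 0. Let (η_k)_{k≥0} be step sizes with η := inf_k η_k > 0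 and sup_k η_k ≤ min{1/β, 1/(2 L_f L_cond)}. Suppose sequences (x_k)_{k≥0} with the given x₀ and (x̃_k)_{k≥0} satisfy, for every k: Λ(x̃_k) = I_n, f(x̃_k) = f(x_k), and x_{k+1} = x̃_k − η_k ∇f(x̃_k). Then f(x_k) − inf f ≤ 2 / (α² η k) for all k ≥ 1. -/
/-- The ℓ²→ℓ² operator norm (largest singular value) of a real matrix. -/
noncomputable def opN {k l : Type*} [Fintype k] [Fintype l] [DecidableEq l]
    (M : Matrix k l ℝ) : ℝ :=
  ‖LinearMap.toContinuousLinearMap (Matrix.toEuclideanLin M)‖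

open Set Filter Topology

lemma opN_zero {n : ℕ} : opN (0 : Matrix (Fin n) (Fin n) ℝ) = 0 := by
  unfold opN; rw [map_zero, map_zero, norm_zero]


open Set Filter Topology in
lemma taylor_seg {d : ℕ} (f : EuclideanSpace ℝ (Fin d) → ℝ)
    (U : Set (EuclideanSpace ℝ (Fin d))) (hUopen : IsOpen U)
    (hfC2 : ContDiffOn ℝ 2 f U)
    (y w : EuclideanSpace ℝ (Fin d)) (C t : ℝ) (ht : 0 ≤ t)
    (hU : ∀ s ∈ Icc 0 t, y - s • w ∈ U)
    (hH : ∀ s ∈ Icc 0 t, fderiv ℝ (fderiv ℝ f) (y - s • w) (-w) (-w) ≤ C) :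
    f (y - t • w) ≤ f y + t * (fderiv ℝ f y (-w)) + C * t ^ 2 / 2 := by
  set z : ℝ → EuclideanSpace ℝ (Fin d) := fun s => y - s • w with hz
  have hz0 : z 0 = y := by simp [hz]
  have hzc : Continuous z := continuous_const.sub (continuous_id.smul continuous_const)
  set O : Set ℝ := z ⁻¹' U with hO
  have hOopen : IsOpen O := hUopen.preimage hzc
  have hIO : Icc 0 t ⊆ O := fun s hs => hU s hs
  have hz' : ∀ s : ℝ, HasDerivAt z (-w) s := by
    intro s
    have h1 : HasDerivAt (fun s : ℝ => s • w) ((1 : ℝ) • w) s :=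
      (hasDerivAt_id s).smul_const w
    simpa [hz, one_smul] using h1.const_sub y
  have hdU : ∀ p ∈ U, DifferentiableAt ℝ f p := fun p hp =>
    (hfC2.contDiffAt (hUopen.mem_nhds hp)).differentiableAt (by norm_num)
  set φ : ℝ → ℝ := fun s => f (z s) with hφdef
  set φ₁ : ℝ → ℝ := fun s => fderiv ℝ f (z s) (-w) with hφ₁def
  have hφ' : ∀ s ∈ O, HasDerivAt φ (φ₁ s) s := fun s hs =>
    ((hdU (z s) hs).hasFDerivAt.comp_hasDerivAt s (hz' s))
  have hF : ContDiffOn ℝ 1 (fderiv ℝ f) U := hfC2.fderiv_of_isOpen hUopen (by norm_num)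
  have hφ₁' : ∀ s ∈ O, HasDerivAt φ₁ (fderiv ℝ (fderiv ℝ f) (z s) (-w) (-w)) s := by
    intro s hs
    have hdF : DifferentiableAt ℝ (fderiv ℝ f) (z s) :=
      (hF.contDiffAt (hUopen.mem_nhds hs)).differentiableAt (by norm_num)
    have h1 : HasDerivAt (fun s => fderiv ℝ f (z s)) (fderiv ℝ (fderiv ℝ f) (z s) (-w)) s :=
      hdF.hasFDerivAt.comp_hasDerivAt s (hz' s)
    have h2 := h1.clm_apply (hasDerivAt_const s (-w))
    simpa only [map_zero, add_zero] using h2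
  -- Step A : φ₁ s ≤ φ₁ 0 + C * s on Icc 0 t
  have stepA : ∀ s ∈ Icc 0 t, φ₁ s ≤ φ₁ 0 + C * s := by
    intro s hs
    set ψ : ℝ → ℝ := fun s => C * s - φ₁ s with hψdef
    have hψ' : ∀ u ∈ O, HasDerivAt ψ (C - fderiv ℝ (fderiv ℝ f) (z u) (-w) (-w)) u := by
      intro u hu
      have h1 : HasDerivAt (fun u : ℝ => C * u) C u := by
        simpa using (hasDerivAt_id u).const_mul C
      exact h1.sub (hφ₁' u hu)
    have hmono : MonotoneOn ψ (Icc 0 t) := by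
      apply monotoneOn_of_deriv_nonneg (convex_Icc 0 t)
      · exact fun u hu => ((hψ' u (hIO hu)).continuousAt).continuousWithinAt
      · intro u hu
        rw [interior_Icc] at hu
        exact ((hψ' u (hIO (Ioo_subset_Icc_self hu))).differentiableAt).differentiableWithinAt
      · intro u hu
        rw [interior_Icc] at hu
        rw [(hψ' u (hIO (Ioo_subset_Icc_self hu))).deriv]
        have := hH u (Ioo_subset_Icc_self hu)
        linarith
    have h0 : ψ 0 ≤ ψ s := hmono (left_mem_Icc.2 ht) hs hs.1
    simp only [hψdef, mul_zero, zero_sub] at h0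
    linarith
  -- Step B
  set χ : ℝ → ℝ := fun s => f y + φ₁ 0 * s + C * s ^ 2 / 2 - φ s with hχdef
  have hχ' : ∀ u ∈ Icc 0 t, HasDerivAt χ (φ₁ 0 + C * u - φ₁ u) u := by
    intro u hu
    have h1 : HasDerivAt (fun u : ℝ => f y + φ₁ 0 * u + C * u ^ 2 / 2)
        (φ₁ 0 + C * u) u := by
      have := (((hasDerivAt_id u).const_mul (φ₁ 0)).const_add (f y)).add
        ((((hasDerivAt_id u).pow 2).const_mul C).div_const 2)
      simpa [mul_comm, mul_assoc, mul_div_assoc, Pi.add_def] using this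
      -- derivative of C*u^2/2 is C*(2*u^1*1)/2 = C*u
    exact h1.sub (hφ' u (hIO hu))
  have hmono : MonotoneOn χ (Icc 0 t) := by
    apply monotoneOn_of_deriv_nonneg (convex_Icc 0 t)
    · exact fun u hu => ((hχ' u hu).continuousAt).continuousWithinAt
    · intro u hu
      rw [interior_Icc] at hu
      exact ((hχ' u (Ioo_subset_Icc_self hu)).differentiableAt).differentiableWithinAt
    · intro u hu
      rw [interior_Icc] at hu
      rw [(hχ' u (Ioo_subset_Icc_self hu)).deriv]
      have := stepA u (Ioo_subset_Icc_self hu)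
      linarith
  have h0 : χ 0 ≤ χ t := hmono (left_mem_Icc.2 ht) (right_mem_Icc.2 ht) ht
  have hχ0 : χ 0 = 0 := by simp [hχdef, hφdef, hz0]
  have hφ10 : φ₁ 0 = fderiv ℝ f y (-w) := by rw [hφ₁def]; simp [hz0]
  simp only [hχdef, hχ0, hφdef] at h0 ⊢
  rw [hφ10, hz0] at h0
  show f (z t) ≤ _
  linarith
open Set Filter Topology

lemma grad_bound {d n : ℕ} (f : EuclideanSpace ℝ (Fin d) → ℝ)
    (x₀ : EuclideanSpace ℝ (Fin d))
    (Λ : EuclideanSpace ℝ (Fin d) → Matrix (Fin n) (Fin n) ℝ)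
    (K : Set (EuclideanSpace ℝ (Fin d)))
    (hKdef : K = {x | f x ≤ f x₀ ∧ opN (Λ x - 1) ≤ 1 / 2})
    (Lcond : ℝ) (hLcond : 0 < Lcond)
    (hΛlip : ∀ x y, opN (Λ x - Λ y) ≤ Lcond * ‖x - y‖)
    (U : Set (EuclideanSpace ℝ (Fin d))) (hUopen : IsOpen U) (hKU : K ⊆ U)
    (hfC2 : ContDiffOn ℝ 2 f U)
    (Lf : ℝ) (hLf : 0 < Lf)
    (hflip : ∀ x ∈ K, ∀ y ∈ K, |f x - f y| ≤ Lf * ‖x - y‖)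
    (y : EuclideanSpace ℝ (Fin d)) (hyK : y ∈ K) (hΛy : Λ y = 1) :
    ‖gradient f y‖ ≤ Lf := by
  set G := gradient f y with hG
  by_cases hG0 : G = 0
  · rw [hG0, norm_zero]; exact hLf.le
  have hGn : 0 < ‖G‖ := norm_pos_iff.2 hG0
  have hyU : y ∈ U := hKU hyK
  have hdf : DifferentiableAt ℝ f y :=
    (hfC2.contDiffAt (hUopen.mem_nhds hyU)).differentiableAt (by norm_num)
  set h : ℝ → ℝ := fun t => f (y - t • G) with hhdef
  have hh0 : h 0 = f y := by simp [hhdef]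
  have hz' : ∀ s : ℝ, HasDerivAt (fun t : ℝ => y - t • G) (-G) s := by
    intro s
    have h1 : HasDerivAt (fun t : ℝ => t • G) ((1 : ℝ) • G) s :=
      (hasDerivAt_id s).smul_const G
    simpa [one_smul] using h1.const_sub y
  have hy0 : y - (0 : ℝ) • G = y := by simp
  have hval : fderiv ℝ f y (-G) = -‖G‖ ^ 2 := by
    have hb : (inner ℝ G (-G) : ℝ) = fderiv ℝ f y (-G) := InnerProductSpace.toDual_symm_apply
    rw [← hb, inner_neg_right, real_inner_self_eq_norm_sq]
  have hder : HasDerivAt h (-‖G‖ ^ 2) 0 := by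
    have h1 : HasFDerivAt f (fderiv ℝ f y) (y - (0 : ℝ) • G) := by
      rw [hy0]; exact hdf.hasFDerivAt
    have h2 := h1.comp_hasDerivAt (0 : ℝ) (hz' 0)
    simpa [hval, hhdef, Function.comp_def] using h2
  have hslope : Tendsto (slope h 0) (𝓝[>] 0) (𝓝 (-‖G‖ ^ 2)) :=
    (hasDerivAt_iff_tendsto_slope.1 hder).mono_left
      (nhdsWithin_mono 0 (fun t ht => ne_of_gt ht))
  -- eventually the perturbed point is in K
  have hfy : f y ≤ f x₀ := by rw [hKdef] at hyK; exact hyK.1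
  have hev1 : ∀ᶠ t in 𝓝[>] (0 : ℝ), slope h 0 t < 0 :=
    hslope.eventually_lt_const (by nlinarith)
  have ht₀ : (0 : ℝ) < 1 / (2 * Lcond * ‖G‖) := by positivity
  have hev2 : ∀ᶠ t in 𝓝[>] (0 : ℝ), t < 1 / (2 * Lcond * ‖G‖) :=
    Filter.eventually_iff.2 (Filter.mem_of_superset
      (Ioo_mem_nhdsGT_of_mem ⟨le_refl 0, ht₀⟩) (fun t ht => ht.2))
  have hev3 : ∀ᶠ t in 𝓝[>] (0 : ℝ), t ∈ Ioi (0 : ℝ) := self_mem_nhdsWithin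
  have hevK : ∀ᶠ t in 𝓝[>] (0 : ℝ), -(Lf * ‖G‖) ≤ slope h 0 t := by
    filter_upwards [hev1, hev2, hev3] with t h1 h2 h3
    have htpos : 0 < t := h3
    have hnorm : ‖y - t • G - y‖ = t * ‖G‖ := by
      rw [sub_sub_cancel_left, norm_neg, norm_smul, Real.norm_eq_abs, abs_of_pos htpos]
    have hmemK : y - t • G ∈ K := by
      rw [hKdef]
      constructor
      · have hst : (h t - h 0) / (t - 0) < 0 := by
          have : slope h 0 t = (h t - h 0) / (t - 0) := slope_def_field h 0 t
          rw [← this]; exact h1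
        rw [sub_zero] at hst
        have : h t - h 0 < 0 := by
          by_contra hc
          push_neg at hc
          nlinarith [div_nonneg hc htpos.le]
        rw [hh0] at this
        have : h t < f y := by linarith
        exact le_trans this.le hfy
      · calc opN (Λ (y - t • G) - 1) = opN (Λ (y - t • G) - Λ y) := by rw [hΛy]
          _ ≤ Lcond * ‖y - t • G - y‖ := hΛlip _ _
          _ = Lcond * (t * ‖G‖) := by rw [hnorm]
          _ ≤ 1 / 2 := by
            have h2' : t * (2 * Lcond * ‖G‖) < 1 := (lt_div_iff₀ (by positivity)).1 h2
            nlinarith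
    have hlip := hflip (y - t • G) hmemK y hyK
    rw [hnorm] at hlip
    have : slope h 0 t = (h t - h 0) / (t - 0) := slope_def_field h 0 t
    rw [this, sub_zero, hh0]
    rw [abs_le] at hlip
    have h4 : -(Lf * (t * ‖G‖)) ≤ f (y - t • G) - f y := hlip.1
    rw [le_div_iff₀ htpos]
    calc -(Lf * ‖G‖) * t = -(Lf * (t * ‖G‖)) := by ring
      _ ≤ f (y - t • G) - f y := h4
      _ = h t - f y := rfl
  have hfin : -(Lf * ‖G‖) ≤ -‖G‖ ^ 2 := ge_of_tendsto hslope hevK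
  nlinarith

set_option maxHeartbeats 1000000 in
/-- Gradient descent with reconditioning: under β-upper-smoothness,
`L_f`-Lipschitzness and the α-weak-PL condition on the closed reconditioned level set `K`,
with a Lipschitz reconditioning matrix `Λ`, the reconditioned gradient iterates converge at
rate `O(1/k)`. -/
theorem stmt_5 {d n : ℕ} (f : EuclideanSpace ℝ (Fin d) → ℝ)
    (hbdd : BddBelow (Set.range f))
    (x₀ : EuclideanSpace ℝ (Fin d))
    (Λ : EuclideanSpace ℝ (Fin d) → Matrix (Fin n) (Fin n) ℝ)
    (hΛpsd : ∀ x, (Λ x).PosSemidef)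
    (K : Set (EuclideanSpace ℝ (Fin d)))
    (hKdef : K = {x | f x ≤ f x₀ ∧ opN (Λ x - 1) ≤ 1 / 2})
    (hKclosed : IsClosed K)
    (Lcond : ℝ) (hLcond : 0 < Lcond)
    (hΛlip : ∀ x y, opN (Λ x - Λ y) ≤ Lcond * ‖x - y‖)
    (U : Set (EuclideanSpace ℝ (Fin d))) (hUopen : IsOpen U) (hKU : K ⊆ U)
    (hfC2 : ContDiffOn ℝ 2 f U)
    (β : ℝ) (hβ : 0 < β)
    (hsmooth : ∀ x ∈ K, ∀ v : EuclideanSpace ℝ (Fin d),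
      fderiv ℝ (fderiv ℝ f) x v v ≤ β * ‖v‖ ^ 2)
    (Lf : ℝ) (hLf : 0 < Lf)
    (hflip : ∀ x ∈ K, ∀ y ∈ K, |f x - f y| ≤ Lf * ‖x - y‖)
    (α : ℝ) (hα : 0 < α)
    (hPL : ∀ x ∈ K, α * (f x - sInf (Set.range f)) ≤ ‖gradient f x‖)
    (ηk : ℕ → ℝ) (η : ℝ) (hη0 : 0 < η) (hηlb : ∀ k, η ≤ ηk k)
    (hηub : ∀ k, ηk k ≤ min (1 / β) (1 / (2 * Lf * Lcond)))
    (x xt : ℕ → EuclideanSpace ℝ (Fin d)) (hx0 : x 0 = x₀)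
    (hrecond : ∀ k : ℕ, Λ (xt k) = 1 ∧ f (xt k) = f (x k))
    (hiter : ∀ k : ℕ, x (k + 1) = xt k - ηk k • gradient f (xt k)) :
    ∀ k : ℕ, 1 ≤ k → f (x k) - sInf (Set.range f) ≤ 2 / (α ^ 2 * η * k) := by
  set m := sInf (Set.range f) with hm
  have hminf : ∀ p, m ≤ f p := fun p => csInf_le hbdd ⟨p, rfl⟩
  -- the descent step
  have descent : ∀ k : ℕ, xt k ∈ K →
      f (x (k + 1)) ≤ f (xt k) - ηk k / 2 * ‖gradient f (xt k)‖ ^ 2 := by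
    intro k hyK
    have hη'pos : 0 < ηk k := lt_of_lt_of_le hη0 (hηlb k)
    have hη'β : ηk k * β ≤ 1 := by
      have h1 : ηk k ≤ 1 / β := le_trans (hηub k) (min_le_left _ _)
      rw [le_div_iff₀ hβ] at h1; exact h1
    have hη'L : ηk k * (2 * Lf * Lcond) ≤ 1 := by
      have h1 : ηk k ≤ 1 / (2 * Lf * Lcond) := le_trans (hηub k) (min_le_right _ _)
      rw [le_div_iff₀ (by positivity)] at h1; exact h1
    have hvLf : ‖gradient f (xt k)‖ ≤ Lf :=
      grad_bound f x₀ Λ K hKdef Lcond hLcond hΛlip U hUopen hKU hfC2 Lf hLf hflip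
        (xt k) hyK (hrecond k).1
    by_cases hv0 : gradient f (xt k) = 0
    · rw [hiter k, hv0, smul_zero, sub_zero]
      simp
    set y := xt k with hy
    set η' := ηk k with hη'
    set v := gradient f y with hv
    have hvn : 0 < ‖v‖ := norm_pos_iff.2 hv0
    set w := η' • v with hwdef
    have hw : ‖w‖ = η' * ‖v‖ := by
      rw [hwdef, norm_smul, Real.norm_eq_abs, abs_of_pos hη'pos]
    set z : ℝ → EuclideanSpace ℝ (Fin d) := fun s => y - s • w with hz
    have hz0 : z 0 = y := by simp [hz]
    have hzc : Continuous z := continuous_const.sub (continuous_id.smul continuous_const)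
    have hx1 : x (k + 1) = z 1 := by rw [hiter k, hz]; simp [hwdef]; rfl
    have hfyx₀ : f y ≤ f x₀ := by rw [hKdef] at hyK; exact hyK.1
    have hznorm : ∀ s : ℝ, 0 ≤ s → ‖z s - y‖ = s * ‖w‖ := by
      intro s hs
      rw [hz]
      simp only [sub_sub_cancel_left, norm_neg, norm_smul, Real.norm_eq_abs, abs_of_nonneg hs]
    have hΛseg : ∀ s ∈ Icc (0 : ℝ) 1, opN (Λ (z s) - 1) ≤ 1 / 2 := by
      intro s hs
      calc opN (Λ (z s) - 1) = opN (Λ (z s) - Λ y) := by rw [(hrecond k).1]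
        _ ≤ Lcond * ‖z s - y‖ := hΛlip _ _
        _ = Lcond * (s * ‖w‖) := by rw [hznorm s hs.1]
        _ ≤ 1 / 2 := by
          rw [hw]
          nlinarith [hs.1, hs.2, hvn.le, hvLf, hη'pos, hη'L, hLcond, hLf,
            mul_le_mul_of_nonneg_left hvLf (mul_nonneg hs.1 hη'pos.le)]
    have hzmemK : ∀ s ∈ Icc (0 : ℝ) 1, f (z s) ≤ f x₀ → z s ∈ K := by
      intro s hs hfz
      rw [hKdef]; exact ⟨hfz, hΛseg s hs⟩
    -- Taylor-type bound
    have hbridge : (inner ℝ v (-w) : ℝ) = fderiv ℝ f y (-w) := InnerProductSpace.toDual_symm_apply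
    have hfd : fderiv ℝ f y (-w) = -(η' * ‖v‖ ^ 2) := by
      rw [← hbridge, hwdef, inner_neg_right, real_inner_smul_right,
        real_inner_self_eq_norm_sq]
    have hTay : ∀ t ∈ Icc (0 : ℝ) 1, (∀ s ∈ Icc 0 t, z s ∈ K) →
        f (z t) ≤ f y - t * η' * ‖v‖ ^ 2 + β * (t * η') ^ 2 / 2 * ‖v‖ ^ 2 := by
      intro t ht hKseg
      have hH : ∀ s ∈ Icc 0 t, fderiv ℝ (fderiv ℝ f) (y - s • w) (-w) (-w) ≤ β * ‖w‖ ^ 2 := by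
        intro s hs
        have := hsmooth (z s) (hKseg s hs) (-w)
        rwa [norm_neg] at this
      have := taylor_seg f U hUopen hfC2 y w (β * ‖w‖ ^ 2) t ht.1
        (fun s hs => hKU (hKseg s hs)) hH
      rw [hfd, hw] at this
      calc f (z t) ≤ f y + t * -(η' * ‖v‖ ^ 2) + β * (η' * ‖v‖) ^ 2 * t ^ 2 / 2 := this
        _ = f y - t * η' * ‖v‖ ^ 2 + β * (t * η') ^ 2 / 2 * ‖v‖ ^ 2 := by ring
    -- the segment stays in K
    set S : Set ℝ := {t | t ∈ Icc (0 : ℝ) 1 ∧ ∀ s ∈ Icc 0 t, z s ∈ K} with hS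
    have h0S : (0 : ℝ) ∈ S := by
      refine ⟨⟨le_refl 0, zero_le_one⟩, fun s hs => ?_⟩
      have : s = 0 := le_antisymm hs.2 hs.1
      rw [this, hz0]; exact hyK
    have hSne : S.Nonempty := ⟨0, h0S⟩
    have hSbdd : BddAbove S := ⟨1, fun t ht => ht.1.2⟩
    set c := sSup S with hc
    have hc0 : 0 ≤ c := le_csSup hSbdd h0S
    have hc1 : c ≤ 1 := csSup_le hSne (fun t ht => ht.1.2)
    have hpre : IsClosed (z ⁻¹' K) := hKclosed.preimage hzc
    have hIco : Ico 0 c ⊆ z ⁻¹' K := by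
      intro s hs
      obtain ⟨t, htS, hst⟩ := exists_lt_of_lt_csSup hSne hs.2
      exact htS.2 s ⟨hs.1, hst.le⟩
    have hcK : ∀ s ∈ Icc 0 c, z s ∈ K := by
      rcases eq_or_lt_of_le hc0 with h | h
      · intro s hs
        rw [← h] at hs
        have : s = 0 := le_antisymm hs.2 hs.1
        rw [this, hz0]; exact hyK
      · intro s hs
        have h1 : Icc 0 c ⊆ z ⁻¹' K := by
          rw [← closure_Ico (ne_of_lt h)]
          exact closure_minimal hIco hpre
        exact h1 hs
    have hcS : c ∈ S := ⟨⟨hc0, hc1⟩, hcK⟩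
    have hceq1 : c = 1 := by
      by_contra hne
      have hclt : c < 1 := lt_of_le_of_ne hc1 hne
      have hTc := hTay c ⟨hc0, hc1⟩ hcK
      obtain ⟨δ, hδpos, hδ⟩ : ∃ δ > 0, ∀ s ∈ Ioc c (min 1 (c + δ)), f (z s) ≤ f x₀ := by
        rcases eq_or_lt_of_le hc0 with h0 | h0
        · -- c = 0 : use the derivative at 0
          have hdf : DifferentiableAt ℝ f y :=
            (hfC2.contDiffAt (hUopen.mem_nhds (hKU hyK))).differentiableAt (by norm_num)
          have hz' : HasDerivAt z (-w) 0 := by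
            have h1 : HasDerivAt (fun s : ℝ => s • w) ((1 : ℝ) • w) 0 :=
              (hasDerivAt_id 0).smul_const w
            simpa [hz, one_smul] using h1.const_sub y
          have hder : HasDerivAt (fun s => f (z s)) (-(η' * ‖v‖ ^ 2)) 0 := by
            have h1 : HasFDerivAt f (fderiv ℝ f y) (z 0) := by
              rw [hz0]; exact hdf.hasFDerivAt
            have h2 := h1.comp_hasDerivAt (0 : ℝ) hz'
            simpa [hfd, Function.comp_def] using h2
          have hslope : Tendsto (slope (fun s => f (z s)) 0) (𝓝[>] 0)
              (𝓝 (-(η' * ‖v‖ ^ 2))) :=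
            (hasDerivAt_iff_tendsto_slope.1 hder).mono_left
              (nhdsWithin_mono 0 (fun t ht => ne_of_gt ht))
          have hev1 : ∀ᶠ s in 𝓝[>] (0 : ℝ), slope (fun s => f (z s)) 0 s < 0 :=
            hslope.eventually_lt_const (neg_lt_zero.2 (by positivity))
          have hev3 : ∀ᶠ s in 𝓝[>] (0 : ℝ), s ∈ Ioi (0 : ℝ) := self_mem_nhdsWithin
          have hev : ∀ᶠ s in 𝓝[>] (0 : ℝ), f (z s) ≤ f x₀ := by
            filter_upwards [hev1, hev3] with s h1 h3
            have hspos : (0 : ℝ) < s := h3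
            have : slope (fun s => f (z s)) 0 s = (f (z s) - f (z 0)) / (s - 0) :=
              slope_def_field _ 0 s
            rw [this, sub_zero] at h1
            have hlt : f (z s) - f (z 0) < 0 := by
              by_contra hcon
              push_neg at hcon
              nlinarith [div_nonneg hcon hspos.le]
            rw [hz0] at hlt
            linarith
          rw [eventually_nhdsWithin_iff, Metric.eventually_nhds_iff] at hev
          obtain ⟨ε, hεpos, hε⟩ := hev
          refine ⟨ε / 2, by positivity, fun s hs => ?_⟩
          have hs1 : c < s := hs.1
          have hs2 : s ≤ min 1 (c + ε / 2) := hs.2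
          have hspos : 0 < s := by rw [← h0] at hs1; exact hs1
          apply hε
          · rw [Real.dist_eq, sub_zero, abs_of_pos hspos]
            have := le_trans hs2 (min_le_right _ _)
            rw [← h0] at this
            linarith
          · exact hspos
        · -- c > 0 : f (z c) < f x₀ strictly, use continuity
          have hflt : f (z c) < f x₀ := by
            have hβc : β * (c * η') ^ 2 / 2 * ‖v‖ ^ 2 ≤ c * η' / 2 * ‖v‖ ^ 2 := by
              have h1 : β * (c * η') ≤ 1 := by nlinarith
              have h2 : β * (c * η') * (c * η') ≤ 1 * (c * η') :=
                mul_le_mul_of_nonneg_right h1 (mul_pos h0 hη'pos).le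
              nlinarith [mul_le_mul_of_nonneg_right h2 (sq_nonneg ‖v‖)]
            have h2 : 0 < c * η' / 2 * ‖v‖ ^ 2 := by positivity
            calc f (z c) ≤ f y - c * η' * ‖v‖ ^ 2 + β * (c * η') ^ 2 / 2 * ‖v‖ ^ 2 := hTc
              _ ≤ f y - c * η' / 2 * ‖v‖ ^ 2 := by nlinarith
              _ < f y := by linarith
              _ ≤ f x₀ := hfyx₀
          have hcU : z c ∈ U := hKU (hcK c ⟨hc0, le_refl c⟩)
          have hcont : ContinuousAt (fun s => f (z s)) c :=
            (((hfC2.contDiffAt (hUopen.mem_nhds hcU)).continuousAt).comp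
              hzc.continuousAt)
          have hev : ∀ᶠ s in 𝓝 c, f (z s) < f x₀ := hcont.eventually_lt_const hflt
          rw [Metric.eventually_nhds_iff] at hev
          obtain ⟨ε, hεpos, hε⟩ := hev
          refine ⟨ε / 2, by positivity, fun s hs => ?_⟩
          have hs2 : s ≤ min 1 (c + ε / 2) := hs.2
          have : dist s c < ε := by
            rw [Real.dist_eq, abs_lt]
            have := le_trans hs2 (min_le_right _ _)
            constructor <;> [linarith [hs.1]; linarith]
          exact (hε this).le
      set t' := min 1 (c + δ) with ht'
      have hct' : c < t' := lt_min hclt (by linarith)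
      have ht'S : t' ∈ S := by
        refine ⟨⟨le_trans hc0 hct'.le, min_le_left _ _⟩, fun s hs => ?_⟩
        rcases le_or_gt s c with hsc | hsc
        · exact hcK s ⟨hs.1, hsc⟩
        · exact hzmemK s ⟨hs.1, le_trans hs.2 (min_le_left _ _)⟩ (hδ s ⟨hsc, hs.2⟩)
      have := le_csSup hSbdd ht'S
      rw [← hc] at this
      linarith
    have h1S : ∀ s ∈ Icc (0 : ℝ) 1, z s ∈ K := by rw [← hceq1]; exact hcS.2
    have hfinal := hTay 1 ⟨zero_le_one, le_refl 1⟩ h1S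
    rw [← hx1] at hfinal
    have : (1 : ℝ) * η' = η' := one_mul η'
    nlinarith [hfinal, sq_nonneg ‖v‖, hη'pos, hη'β, mul_nonneg hη'pos.le (sq_nonneg ‖v‖)]
  -- membership of the reconditioned iterates in K
  have hmemK : ∀ k : ℕ, f (x k) ≤ f x₀ → xt k ∈ K := by
    intro k h
    rw [hKdef]
    refine ⟨by rw [(hrecond k).2]; exact h, ?_⟩
    rw [(hrecond k).1, sub_self, opN_zero]
    norm_num
  have hmain : ∀ k : ℕ, f (x k) ≤ f x₀ ∧
      f (x (k + 1)) ≤ f (x k) - ηk k / 2 * ‖gradient f (xt k)‖ ^ 2 := by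
    intro k
    induction k with
    | zero =>
      have h0 : f (x 0) ≤ f x₀ := le_of_eq (by rw [hx0])
      have hd := descent 0 (hmemK 0 h0)
      rw [(hrecond 0).2] at hd
      exact ⟨h0, hd⟩
    | succ k ih =>
      have hpos : 0 ≤ ηk k / 2 * ‖gradient f (xt k)‖ ^ 2 :=
        mul_nonneg (by linarith [hηlb k] : (0 : ℝ) ≤ ηk k / 2) (sq_nonneg _)
      have hle : f (x (k + 1)) ≤ f x₀ := le_trans ih.2 (by linarith [ih.1])
      have hd := descent (k + 1) (hmemK (k + 1) hle)
      rw [(hrecond (k + 1)).2] at hd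
      exact ⟨hle, hd⟩
  -- the recursion for the gap
  set c' : ℝ := α ^ 2 * η / 2 with hc'
  have hc'pos : 0 < c' := by positivity
  have hg0 : ∀ k, 0 ≤ f (x k) - m := fun k => sub_nonneg.2 (hminf _)
  have hrec : ∀ k : ℕ, f (x (k + 1)) - m ≤ (f (x k) - m) - c' * (f (x k) - m) ^ 2 := by
    intro k
    have hxtK : xt k ∈ K := hmemK k (hmain k).1
    have hPLk := hPL (xt k) hxtK
    rw [(hrecond k).2] at hPLk
    have hd := (hmain k).2
    have hgnn : 0 ≤ α * (f (x k) - m) := mul_nonneg hα.le (hg0 k)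
    have hsq : (α * (f (x k) - m)) ^ 2 ≤ ‖gradient f (xt k)‖ ^ 2 :=
      pow_le_pow_left₀ hgnn hPLk 2
    have hstep : η * (α * (f (x k) - m)) ^ 2 ≤ ηk k * ‖gradient f (xt k)‖ ^ 2 :=
      mul_le_mul (hηlb k) hsq (by positivity) (le_trans hη0.le (hηlb k))
    nlinarith [hstep, hd]
  -- the 1/k rate by induction
  have harith : ∀ k : ℕ, f (x (k + 1)) - m ≤ 1 / (c' * (k + 1)) := by
    intro k
    induction k with
    | zero =>
      have h1 := hrec 0
      have h2 := hg0 0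
      have h3 := hg0 1
      push_cast
      rw [le_div_iff₀ (by positivity)]
      nlinarith [sq_nonneg (2 * c' * (f (x 0) - m) - 1)]
    | succ k ih =>
      have hab := hrec (k + 1)
      have ha := hg0 (k + 1)
      have hb := hg0 (k + 2)
      rw [le_div_iff₀ (by positivity)] at ih ⊢
      push_cast at ih ⊢
      set a := f (x (k + 1)) - m with hadef
      set b := f (x (k + 2)) - m with hbdef
      have hk1 : (1 : ℝ) ≤ (k : ℝ) + 1 := by
        have : (0 : ℝ) ≤ (k : ℝ) := Nat.cast_nonneg k
        linarith
      have hu1 : c' * a ≤ 1 := by nlinarith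
      have hfact : 0 ≤ (1 - ((k : ℝ) + 1) * (c' * a)) * (1 - c' * a) :=
        mul_nonneg (by nlinarith) (by linarith)
      nlinarith [sq_nonneg (c' * a), mul_le_mul_of_nonneg_right hab hc'pos.le]
  -- conclusion
  intro k hk
  obtain ⟨j, rfl⟩ : ∃ j, k = j + 1 := ⟨k - 1, (Nat.succ_pred_eq_of_pos hk).symm⟩
  have h1 := harith j
  have heq : 1 / (c' * ((j : ℝ) + 1)) = 2 / (α ^ 2 * η * ((j : ℕ) + 1 : ℕ)) := by
    rw [hc']
    push_cast
    rw [div_eq_div_iff (by positivity) (by positivity)]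
    ring
  rw [heq] at h1
  push_cast at h1 ⊢
  exact h1
end

section
/- Let X ∈ ℝ^{d×d} and let Y₀ ∈ ℝ^{d×d} be symmetric positive semidefinite, and suppose the integral Γ₀ := ∫₀^∞ exp(sX) Y₀ exp(sX)ᵀ ds converges. For t ≥ 0 set Γ₀^{[t]} := ∫₀^t exp(sX) Y₀ exp(sX)ᵀ ds and P₀(t) := exp(tX) Γ₀ exp(tX)ᵀ. Then: (a) P₀(t) = ∫_t^∞ exp(sX) Y₀ exp(sX)ᵀ ds for all t ≥ 0; (b) if Γ₀ ≠ 0, then for all s, t ≥ 0, P₀(s + t) ⪯ (1 − λ_min(Γ₀^{[s]})/‖Γ₀‖) · P₀(t) in the Loewner order; and (c) if Γ₀ is positive definite, then X is Hurwitz stable. -/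
open Matrix MeasureTheory

attribute [local instance] Matrix.normedAddCommGroup Matrix.normedSpace

/-- A real square matrix is Hurwitz stable if all eigenvalues of its complexification
have strictly negative real part. -/
def IsHurwitz {d : ℕ} (M : Matrix (Fin d) (Fin d) ℝ) : Prop :=
  ∀ μ ∈ spectrum ℂ (M.map (algebraMap ℝ ℂ)), μ.re < 0

/-- The smallest eigenvalue of a symmetric real matrix, as the infimum of the
Rayleigh quotient over the unit sphere. -/
noncomputable def lamMin {k : Type*} [Fintype k] (M : Matrix k k ℝ) : ℝ :=
  sInf {r : ℝ | ∃ v : k → ℝ, v ⬝ᵥ v = 1 ∧ r = v ⬝ᵥ M.mulVec v}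

noncomputable def matCENorm {d : ℕ} : ContinuousENorm (Matrix (Fin d) (Fin d) ℝ) :=
  SeminormedAddGroup.toContinuousENorm

attribute [local instance] matCENorm

section Aux

variable {d : ℕ}

lemma ctR (M : Matrix (Fin d) (Fin d) ℝ) : Mᴴ = Mᵀ := by
  ext i j; simp [Matrix.conjTranspose_apply]

noncomputable def conjCLM (A B : Matrix (Fin d) (Fin d) ℝ) :
    Matrix (Fin d) (Fin d) ℝ →L[ℝ] Matrix (Fin d) (Fin d) ℝ :=
  LinearMap.toContinuousLinearMap ((LinearMap.mulRight ℝ B).comp (LinearMap.mulLeft ℝ A))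

lemma conjCLM_apply (A B M : Matrix (Fin d) (Fin d) ℝ) : conjCLM A B M = A * M * B := by
  simp [conjCLM, mul_assoc]

lemma integral_conj' {f : ℝ → Matrix (Fin d) (Fin d) ℝ} {s : Set ℝ}
    (hf : IntegrableOn f s) (A B : Matrix (Fin d) (Fin d) ℝ) :
    A * (∫ x in s, f x) * B = ∫ x in s, A * f x * B := by
  have := (ContinuousLinearMap.integral_comp_comm (conjCLM A B) hf).symm
  exact this

noncomputable def dotCLM (v : Fin d → ℝ) : Matrix (Fin d) (Fin d) ℝ →L[ℝ] ℝ :=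
  LinearMap.toContinuousLinearMap
    { toFun := fun M => v ⬝ᵥ M *ᵥ v
      map_add' := by intro M N; simp [Matrix.add_mulVec, dotProduct_add]
      map_smul' := by intro r M; simp [Matrix.smul_mulVec, dotProduct_smul] }

lemma dotCLM_apply (v : Fin d → ℝ) (M : Matrix (Fin d) (Fin d) ℝ) :
    dotCLM v M = v ⬝ᵥ M *ᵥ v := rfl

noncomputable def transCLM : Matrix (Fin d) (Fin d) ℝ →L[ℝ] Matrix (Fin d) (Fin d) ℝ :=
  LinearMap.toContinuousLinearMap
    { toFun := fun M : Matrix (Fin d) (Fin d) ℝ => Mᵀ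
      map_add' := by intro M N; simp
      map_smul' := by intro r M; simp }

lemma integral_psd {f : ℝ → Matrix (Fin d) (Fin d) ℝ} {s : Set ℝ}
    (hf : IntegrableOn f s) (hm : MeasurableSet s) (h : ∀ x ∈ s, (f x).PosSemidef) :
    (∫ x in s, f x).PosSemidef := by
  rw [Matrix.posSemidef_iff_dotProduct_mulVec]
  constructor
  · rw [Matrix.IsHermitian, ctR]
    have h1 : (∫ x in s, f x)ᵀ = ∫ x in s, (f x)ᵀ := by
      have := (ContinuousLinearMap.integral_comp_comm transCLM hf).symm
      exact this
    rw [h1]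
    refine setIntegral_congr_fun hm fun x hx => ?_
    have := (h x hx).1
    rwa [Matrix.IsHermitian, ctR] at this
  · intro v
    have h1 : star v ⬝ᵥ (∫ x in s, f x) *ᵥ v = ∫ x in s, v ⬝ᵥ (f x) *ᵥ v := by
      have := (ContinuousLinearMap.integral_comp_comm (dotCLM v) hf).symm
      exact this
    rw [h1]
    refine setIntegral_nonneg hm fun x hx => ?_
    simpa [star_trivial] using (h x hx).dotProduct_mulVec_nonneg v

lemma lamMin_bddBelow {M : Matrix (Fin d) (Fin d) ℝ} (hM : M.PosSemidef) :
    BddBelow {r : ℝ | ∃ v : Fin d → ℝ, v ⬝ᵥ v = 1 ∧ r = v ⬝ᵥ M.mulVec v} := by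
  refine ⟨0, fun r hr => ?_⟩
  obtain ⟨v, -, rfl⟩ := hr
  simpa [star_trivial] using hM.dotProduct_mulVec_nonneg v

lemma lamMin_nonneg {M : Matrix (Fin d) (Fin d) ℝ} (hM : M.PosSemidef) : 0 ≤ lamMin M := by
  apply Real.sInf_nonneg
  rintro r ⟨v, -, rfl⟩
  simpa [star_trivial] using hM.dotProduct_mulVec_nonneg v

lemma dotProduct_self_nonneg' (v : Fin d → ℝ) : 0 ≤ v ⬝ᵥ v :=
  Finset.sum_nonneg fun _ _ => mul_self_nonneg _

lemma lamMin_quad {M : Matrix (Fin d) (Fin d) ℝ} (hM : M.PosSemidef) (v : Fin d → ℝ) :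
    lamMin M * (v ⬝ᵥ v) ≤ v ⬝ᵥ M *ᵥ v := by
  rcases eq_or_ne (v ⬝ᵥ v) 0 with h0 | h0
  · rw [h0, mul_zero]
    simpa [star_trivial] using hM.dotProduct_mulVec_nonneg v
  · have hpos : 0 < v ⬝ᵥ v := lt_of_le_of_ne (dotProduct_self_nonneg' v) (Ne.symm h0)
    set c := v ⬝ᵥ v with hc
    set w := (Real.sqrt c)⁻¹ • v with hw
    have hsq : Real.sqrt c * Real.sqrt c = c := Real.mul_self_sqrt hpos.le
    have hs0 : Real.sqrt c ≠ 0 := by positivity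
    have hww : w ⬝ᵥ w = 1 := by
      rw [hw, smul_dotProduct, dotProduct_smul, smul_eq_mul, smul_eq_mul, ← hc]
      field_simp
      rw [sq, hsq]
    have h1 : lamMin M ≤ w ⬝ᵥ M *ᵥ w :=
      csInf_le (lamMin_bddBelow hM) ⟨w, hww, rfl⟩
    have h2 : w ⬝ᵥ M *ᵥ w = c⁻¹ * (v ⬝ᵥ M *ᵥ v) := by
      rw [hw, smul_dotProduct, Matrix.mulVec_smul, dotProduct_smul, smul_eq_mul, smul_eq_mul,
        ← mul_assoc, ← mul_inv, hsq]
    calc lamMin M * c ≤ (c⁻¹ * (v ⬝ᵥ M *ᵥ v)) * c :=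
          mul_le_mul_of_nonneg_right (h2 ▸ h1) hpos.le
      _ = v ⬝ᵥ M *ᵥ v := by field_simp

lemma inner_euclidean (v w : Fin d → ℝ) :
    @inner ℝ _ _ ((WithLp.equiv 2 (Fin d → ℝ)).symm v) ((WithLp.equiv 2 (Fin d → ℝ)).symm w)
      = v ⬝ᵥ w := by
  simp [PiLp.inner_apply, RCLike.inner_apply, dotProduct, mul_comm]

lemma opN_quad (M : Matrix (Fin d) (Fin d) ℝ) (v : Fin d → ℝ) :
    v ⬝ᵥ M *ᵥ v ≤ opN M * (v ⬝ᵥ v) := by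
  set u : EuclideanSpace ℝ (Fin d) := (WithLp.equiv 2 (Fin d → ℝ)).symm v with hu
  set L := LinearMap.toContinuousLinearMap (Matrix.toEuclideanLin M) with hL
  have hLu : L u = (WithLp.equiv 2 (Fin d → ℝ)).symm (M *ᵥ v) := by
    rw [hL, hu]
    rfl
  have h1 : v ⬝ᵥ M *ᵥ v = @inner ℝ _ _ u (L u) := by
    rw [hLu, hu, inner_euclidean]
  have h2 : v ⬝ᵥ v = ‖u‖ * ‖u‖ := by
    rw [← real_inner_self_eq_norm_mul_norm, hu, inner_euclidean]
  rw [h1, h2]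
  calc @inner ℝ _ _ u (L u) ≤ ‖u‖ * ‖L u‖ := real_inner_le_norm u (L u)
    _ ≤ ‖u‖ * (‖L‖ * ‖u‖) := mul_le_mul_of_nonneg_left (L.le_opNorm u) (norm_nonneg u)
    _ = opN M * (‖u‖ * ‖u‖) := by rw [opN]; ring

lemma opN_pos {M : Matrix (Fin d) (Fin d) ℝ} (hM : M ≠ 0) : 0 < opN M := by
  rw [opN, norm_pos_iff]
  intro h0
  apply hM
  have h1 : Matrix.toEuclideanLin M = 0 := by
    have := congrArg (fun L : EuclideanSpace ℝ (Fin d) →L[ℝ] EuclideanSpace ℝ (Fin d) =>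
      (L : EuclideanSpace ℝ (Fin d) →ₗ[ℝ] EuclideanSpace ℝ (Fin d))) h0
    simpa using this
  simpa using congrArg Matrix.toEuclideanLin.symm h1

lemma exp_smul_add (X : Matrix (Fin d) (Fin d) ℝ) (a b : ℝ) :
    NormedSpace.exp ((a + b) • X) =
      NormedSpace.exp (a • X) * NormedSpace.exp (b • X) := by
  rw [add_smul]
  exact Matrix.exp_add_of_commute _ _ (((Commute.refl X).smul_left a).smul_right b)

lemma shift_integral {E : Type*} [NormedAddCommGroup E] [NormedSpace ℝ E]
    (f : ℝ → E) (t : ℝ) :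
    (∫ x in Set.Ioi t, f x) = ∫ x in Set.Ioi 0, f (x + t) := by
  have h1 : MeasurePreserving (fun x : ℝ => x + t) volume volume :=
    measurePreserving_add_right volume t
  have h2 : MeasurableEmbedding (fun x : ℝ => x + t) :=
    (MeasurableEquiv.addRight t).measurableEmbedding
  have hpre : (fun x : ℝ => x + t) ⁻¹' Set.Ioi t = Set.Ioi 0 := by ext x; simp
  calc (∫ x in Set.Ioi t, f x) = ∫ x in Set.Ioi t, f x ∂(Measure.map (fun x => x + t) volume) := by
        rw [h1.map_eq]
    _ = ∫ x in (fun x : ℝ => x + t) ⁻¹' Set.Ioi t, f (x + t) := h2.setIntegral_map f (Set.Ioi t)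
    _ = ∫ x in Set.Ioi 0, f (x + t) := by rw [hpre]

lemma tail_eq (X Y₀ : Matrix (Fin d) (Fin d) ℝ)
    (hint : IntegrableOn
      (fun s : ℝ => NormedSpace.exp (s • X) * Y₀ * (NormedSpace.exp (s • X))ᵀ)
      (Set.Ioi 0)) (t : ℝ) :
    NormedSpace.exp (t • X) *
        (∫ s in Set.Ioi (0:ℝ),
          NormedSpace.exp (s • X) * Y₀ * (NormedSpace.exp (s • X))ᵀ) *
        (NormedSpace.exp (t • X))ᵀ =
      ∫ s in Set.Ioi t,
        NormedSpace.exp (s • X) * Y₀ * (NormedSpace.exp (s • X))ᵀ := by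
  rw [shift_integral (fun s => NormedSpace.exp (s • X) * Y₀ * (NormedSpace.exp (s • X))ᵀ) t,
    integral_conj' hint]
  refine setIntegral_congr_fun measurableSet_Ioi fun x _ => ?_
  have e1 : NormedSpace.exp ((x + t) • X) =
      NormedSpace.exp (t • X) * NormedSpace.exp (x • X) := by
    rw [add_comm]; exact exp_smul_add X t x
  show NormedSpace.exp (t • X) *
      (NormedSpace.exp (x • X) * Y₀ * (NormedSpace.exp (x • X))ᵀ) *
      (NormedSpace.exp (t • X))ᵀ = _
  rw [e1, Matrix.transpose_mul]
  simp [mul_assoc]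


noncomputable def mulVecCLM (w : Fin d → ℂ) : Matrix (Fin d) (Fin d) ℂ →L[ℂ] (Fin d → ℂ) :=
  LinearMap.toContinuousLinearMap
    { toFun := fun M => M *ᵥ w
      map_add' := by intro M N; simp [Matrix.add_mulVec]
      map_smul' := by intro r M; simp [Matrix.smul_mulVec]}

lemma pow_mulVec_eigen (N : Matrix (Fin d) (Fin d) ℂ) (w : Fin d → ℂ) (μ : ℂ)
    (h : N *ᵥ w = μ • w) (n : ℕ) : (N ^ n) *ᵥ w = (μ ^ n) • w := by
  induction n with
  | zero => simp
  | succ n ih =>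
      rw [pow_succ', ← Matrix.mulVec_mulVec, ih, Matrix.mulVec_smul, h, smul_smul, ← pow_succ]

lemma exp_mulVec_eigen (N : Matrix (Fin d) (Fin d) ℂ) (w : Fin d → ℂ) (μ : ℂ)
    (h : N *ᵥ w = μ • w) :
    (NormedSpace.exp N) *ᵥ w = Complex.exp μ • w := by
  letI : NormedRing (Matrix (Fin d) (Fin d) ℂ) := Matrix.linftyOpNormedRing
  letI : NormedAlgebra ℂ (Matrix (Fin d) (Fin d) ℂ) := Matrix.linftyOpNormedAlgebra
  haveI : @CompleteSpace (Matrix (Fin d) (Fin d) ℂ) (@PseudoMetricSpace.toUniformSpace _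
      (@SeminormedRing.toPseudoMetricSpace _ (@NormedRing.toSeminormedRing _ Matrix.linftyOpNormedRing))) :=
    FiniteDimensional.complete ℂ _
  have hsum : Summable (fun n : ℕ => ((n.factorial : ℂ))⁻¹ • N ^ n) :=
    NormedSpace.expSeries_summable' N
  have hsc : Summable (fun n : ℕ => ((n.factorial : ℂ))⁻¹ • μ ^ n) :=
    NormedSpace.expSeries_summable' μ
  have h1 : NormedSpace.exp N = ∑' n : ℕ, ((n.factorial : ℂ))⁻¹ • N ^ n := by
    rw [NormedSpace.exp_eq_tsum ℂ]
  rw [h1]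
  have h2 := (mulVecCLM w).map_tsum hsum
  have h3 : (mulVecCLM w) (∑' n : ℕ, ((n.factorial : ℂ))⁻¹ • N ^ n)
      = ∑' n : ℕ, ((n.factorial : ℂ))⁻¹ • ((N ^ n) *ᵥ w) := by
    rw [h2]
    congr 1
    ext n
    simp [mulVecCLM, Matrix.smul_mulVec]
  have h4 : (∑' n : ℕ, ((n.factorial : ℂ))⁻¹ • N ^ n) *ᵥ w
      = ∑' n : ℕ, ((n.factorial : ℂ))⁻¹ • ((N ^ n) *ᵥ w) := h3
  rw [h4]
  have h5 : ∀ n : ℕ, ((n.factorial : ℂ))⁻¹ • ((N ^ n) *ᵥ w)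
      = (((n.factorial : ℂ))⁻¹ • μ ^ n) • w := by
    intro n
    rw [pow_mulVec_eigen N w μ h n, smul_smul, smul_eq_mul]
  simp_rw [h5]
  rw [hsc.tsum_smul_const]
  congr 1
  rw [Complex.exp_eq_exp_ℂ, NormedSpace.exp_eq_tsum ℂ]

lemma map_exp_complex (M : Matrix (Fin d) (Fin d) ℝ) :
    (NormedSpace.exp M).map (algebraMap ℝ ℂ) = NormedSpace.exp (M.map (algebraMap ℝ ℂ)) := by
  letI : NormedRing (Matrix (Fin d) (Fin d) ℝ) := Matrix.linftyOpNormedRing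
  letI : NormedAlgebra ℝ (Matrix (Fin d) (Fin d) ℝ) := Matrix.linftyOpNormedAlgebra
  letI : NormedRing (Matrix (Fin d) (Fin d) ℂ) := Matrix.linftyOpNormedRing
  letI : NormedAlgebra ℝ (Matrix (Fin d) (Fin d) ℂ) := Matrix.linftyOpNormedAlgebra
  letI : NormedAlgebra ℂ (Matrix (Fin d) (Fin d) ℂ) := Matrix.linftyOpNormedAlgebra
  letI : NormedAlgebra ℚ (Matrix (Fin d) (Fin d) ℝ) := Matrix.linftyOpNormedAlgebra
  letI : NormedAlgebra ℚ (Matrix (Fin d) (Fin d) ℂ) := Matrix.linftyOpNormedAlgebra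
  haveI : @CompleteSpace (Matrix (Fin d) (Fin d) ℝ) (@PseudoMetricSpace.toUniformSpace _
      (@SeminormedRing.toPseudoMetricSpace _ (@NormedRing.toSeminormedRing _ Matrix.linftyOpNormedRing))) :=
    FiniteDimensional.complete ℝ _
  have hf : Continuous fun A : Matrix (Fin d) (Fin d) ℝ => A.map (algebraMap ℝ ℂ) :=
    Continuous.matrix_map continuous_id (continuous_algebraMap ℝ ℂ)
  have h1 := NormedSpace.map_exp ((algebraMap ℝ ℂ).mapMatrix) hf M
  have h2 : (NormedSpace.exp : Matrix (Fin d) (Fin d) ℂ → _) = NormedSpace.exp := rfl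
  simp only [RingHom.mapMatrix_apply] at h1
  exact h1

lemma re_quad (M : Matrix (Fin d) (Fin d) ℝ) (w : Fin d → ℂ) :
    (star w ⬝ᵥ (M.map (algebraMap ℝ ℂ)) *ᵥ w).re
      = (fun i => (w i).re) ⬝ᵥ M *ᵥ (fun i => (w i).re)
        + (fun i => (w i).im) ⬝ᵥ M *ᵥ (fun i => (w i).im) := by
  simp only [dotProduct, mulVec, Pi.star_apply, Matrix.map_apply, Finset.mul_sum,
    Complex.re_sum, Complex.mul_re, Complex.conj_re, Complex.conj_im]
  rw [← Finset.sum_add_distrib]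
  refine Finset.sum_congr rfl fun i _ => ?_
  rw [← Finset.sum_add_distrib]
  refine Finset.sum_congr rfl fun j _ => ?_
  simp only [RCLike.star_def, Complex.conj_re, Complex.conj_im, Complex.coe_algebraMap,
    Complex.ofReal_re, Complex.ofReal_im, Complex.mul_im, Complex.mul_re]
  ring

lemma map_smul_complex (x : ℝ) (M : Matrix (Fin d) (Fin d) ℝ) :
    (x • M).map (algebraMap ℝ ℂ) = x • M.map (algebraMap ℝ ℂ) := by
  ext i j
  simp [Matrix.map_apply, Complex.real_smul]

lemma conj_eig {Xc : Matrix (Fin d) (Fin d) ℂ} (hXc : Xc.map star = Xc)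
    {w : Fin d → ℂ} {μ : ℂ} (h : Xc *ᵥ w = μ • w) :
    Xc *ᵥ star w = star μ • star w := by
  have h1 : star (Xc *ᵥ w) = star w ᵥ* Xcᴴ := Matrix.star_mulVec Xc w
  have h2 : Xcᴴ = Xcᵀ := by
    ext i j
    simp only [Matrix.conjTranspose_apply, Matrix.transpose_apply]
    have := congrFun (congrFun hXc j) i
    simpa [Matrix.map_apply] using this
  have h3 : star w ᵥ* Xcᵀ = Xc *ᵥ star w := Matrix.vecMul_transpose Xc (star w)
  rw [h, h2, h3] at h1
  rw [← h1, star_smul]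

lemma phi_pointwise (X Y₀ : Matrix (Fin d) (Fin d) ℝ) (μ : ℂ) (w : Fin d → ℂ)
    (heig : (X.map (algebraMap ℝ ℂ))ᵀ *ᵥ w = μ • w) (x : ℝ) :
    (fun i => (w i).re) ⬝ᵥ (NormedSpace.exp (x • X) * Y₀ * (NormedSpace.exp (x • X))ᵀ)
        *ᵥ (fun i => (w i).re)
      + (fun i => (w i).im) ⬝ᵥ (NormedSpace.exp (x • X) * Y₀ * (NormedSpace.exp (x • X))ᵀ)
        *ᵥ (fun i => (w i).im)
      = Real.exp (2 * μ.re * x) *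
        ((fun i => (w i).re) ⬝ᵥ Y₀ *ᵥ (fun i => (w i).re)
          + (fun i => (w i).im) ⬝ᵥ Y₀ *ᵥ (fun i => (w i).im)) := by
  set Xc := X.map (algebraMap ℝ ℂ) with hXcdef
  set Yc := Y₀.map (algebraMap ℝ ℂ) with hYcdef
  have hXstar : Xcᵀ.map star = Xcᵀ := by
    ext i j
    simp [Matrix.map_apply, hXcdef, RCLike.star_def, Complex.conj_ofReal]
  have hmap : (NormedSpace.exp (x • X) * Y₀ * (NormedSpace.exp (x • X))ᵀ).map
        (algebraMap ℝ ℂ)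
      = NormedSpace.exp (x • Xc) * Yc * (NormedSpace.exp (x • Xc))ᵀ := by
    rw [Matrix.map_mul, Matrix.map_mul, Matrix.transpose_map, map_exp_complex,
      map_smul_complex]
  have hET : (NormedSpace.exp (x • Xc))ᵀ = NormedSpace.exp (x • Xcᵀ) := by
    rw [← Matrix.exp_transpose, Matrix.transpose_smul]
  have eigen1 : (x • Xcᵀ) *ᵥ w = ((x : ℂ) * μ) • w := by
    rw [Matrix.smul_mulVec, heig, ← smul_assoc, Complex.real_smul]
  have eigen2 : (x • Xcᵀ) *ᵥ star w = ((x : ℂ) * (starRingEnd ℂ) μ) • star w := by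
    rw [Matrix.smul_mulVec, conj_eig hXstar heig, ← smul_assoc, Complex.real_smul]
    rfl
  have E1 : NormedSpace.exp (x • Xcᵀ) *ᵥ w = Complex.exp ((x : ℂ) * μ) • w :=
    exp_mulVec_eigen _ _ _ eigen1
  have E2 : NormedSpace.exp (x • Xcᵀ) *ᵥ star w
      = Complex.exp ((x : ℂ) * (starRingEnd ℂ) μ) • star w :=
    exp_mulVec_eigen _ _ _ eigen2
  have hq : star w ⬝ᵥ ((NormedSpace.exp (x • X) * Y₀ *
        (NormedSpace.exp (x • X))ᵀ).map (algebraMap ℝ ℂ)) *ᵥ w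
      = Complex.exp ((x : ℂ) * (starRingEnd ℂ) μ) * (Complex.exp ((x : ℂ) * μ) *
        (star w ⬝ᵥ Yc *ᵥ w)) := by
    rw [hmap, ← Matrix.mulVec_mulVec, ← Matrix.mulVec_mulVec, hET, E1,
      Matrix.dotProduct_mulVec, ← Matrix.mulVec_transpose, hET, E2]
    rw [Matrix.mulVec_smul, dotProduct_smul, smul_dotProduct]
    simp only [smul_eq_mul]
    ring
  have hcomb : Complex.exp ((x : ℂ) * (starRingEnd ℂ) μ) * Complex.exp ((x : ℂ) * μ)
      = (Real.exp (2 * μ.re * x) : ℂ) := by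
    rw [← Complex.exp_add, Complex.ofReal_exp]
    congr 1
    have : (x : ℂ) * (starRingEnd ℂ) μ + (x : ℂ) * μ = (x : ℂ) * (μ + (starRingEnd ℂ) μ) := by
      ring
    rw [this, Complex.add_conj]
    push_cast
    ring
  have lhs_eq := re_quad (NormedSpace.exp (x • X) * Y₀ * (NormedSpace.exp (x • X))ᵀ) w
  have rhs_eq := re_quad Y₀ w
  rw [← lhs_eq, ← rhs_eq, hq, ← mul_assoc, hcomb]
  rw [Complex.re_ofReal_mul]

end Aux

/-- Decay estimates for `P₀(t) = exp(tX) Γ₀ exp(tX)ᵀ` where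
`Γ₀ = ∫₀^∞ exp(sX) Y₀ exp(sX)ᵀ ds`: (a) `P₀(t)` is the tail of the integral;
(b) a geometric contraction in the Loewner order; (c) positive definiteness of `Γ₀`
forces `X` to be Hurwitz stable. -/
theorem stmt_10 {d : ℕ} (X Y₀ : Matrix (Fin d) (Fin d) ℝ)
    (hY₀ : Y₀.PosSemidef)
    (hint : @IntegrableOn _ _ _ _ SeminormedAddGroup.toContinuousENorm
      (fun s : ℝ => NormedSpace.exp (s • X) * Y₀ * (NormedSpace.exp (s • X))ᵀ)
      (Set.Ioi 0) volume) :
    (∀ t : ℝ, 0 ≤ t →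
      NormedSpace.exp (t • X) *
          (∫ s in Set.Ioi (0:ℝ),
            NormedSpace.exp (s • X) * Y₀ * (NormedSpace.exp (s • X))ᵀ) *
          (NormedSpace.exp (t • X))ᵀ =
        ∫ s in Set.Ioi t,
          NormedSpace.exp (s • X) * Y₀ * (NormedSpace.exp (s • X))ᵀ) ∧
    ((∫ s in Set.Ioi (0:ℝ),
        NormedSpace.exp (s • X) * Y₀ * (NormedSpace.exp (s • X))ᵀ) ≠ 0 →
      ∀ s t : ℝ, 0 ≤ s → 0 ≤ t →
        ((1 - lamMin (∫ u in Set.Ioc (0:ℝ) s,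
              NormedSpace.exp (u • X) * Y₀ * (NormedSpace.exp (u • X))ᵀ) /
            opN (∫ u in Set.Ioi (0:ℝ),
              NormedSpace.exp (u • X) * Y₀ * (NormedSpace.exp (u • X))ᵀ)) •
            (NormedSpace.exp (t • X) *
              (∫ u in Set.Ioi (0:ℝ),
                NormedSpace.exp (u • X) * Y₀ * (NormedSpace.exp (u • X))ᵀ) *
              (NormedSpace.exp (t • X))ᵀ) -
          NormedSpace.exp ((s + t) • X) *
            (∫ u in Set.Ioi (0:ℝ),
              NormedSpace.exp (u • X) * Y₀ * (NormedSpace.exp (u • X))ᵀ) *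
            (NormedSpace.exp ((s + t) • X))ᵀ).PosSemidef) ∧
    ((∫ s in Set.Ioi (0:ℝ),
        NormedSpace.exp (s • X) * Y₀ * (NormedSpace.exp (s • X))ᵀ).PosDef →
      IsHurwitz X) := by
  set f : ℝ → Matrix (Fin d) (Fin d) ℝ :=
    fun s => NormedSpace.exp (s • X) * Y₀ * (NormedSpace.exp (s • X))ᵀ with hf
  have hfpsd : ∀ x : ℝ, (f x).PosSemidef := fun x => by
    have := hY₀.mul_mul_conjTranspose_same (NormedSpace.exp (x • X))
    rwa [ctR] at this
  set Γ : Matrix (Fin d) (Fin d) ℝ := ∫ s in Set.Ioi (0:ℝ), f s with hΓ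
  have hΓpsd : Γ.PosSemidef := integral_psd hint measurableSet_Ioi fun x _ => hfpsd x
  refine ⟨fun t _ => tail_eq X Y₀ hint t, ?_, ?_⟩
  · -- part (b)
    intro hΓne s t hs ht
    set Γs : Matrix (Fin d) (Fin d) ℝ := ∫ u in Set.Ioc (0:ℝ) s, f u with hΓs
    have hΓs_int : IntegrableOn f (Set.Ioc 0 s) := hint.mono_set Set.Ioc_subset_Ioi_self
    have hΓspsd : Γs.PosSemidef := integral_psd hΓs_int measurableSet_Ioc fun x _ => hfpsd x
    have hop : 0 < opN Γ := opN_pos hΓne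
    set c : ℝ := lamMin Γs / opN Γ with hc
    have hc0 : 0 ≤ c := div_nonneg (lamMin_nonneg hΓspsd) hop.le
    -- the inner matrix is PSD
    have hinner : (Γs - c • Γ).PosSemidef := by
      rw [Matrix.posSemidef_iff_dotProduct_mulVec]
      constructor
      · have h3 : Γᵀ = Γ := by rw [← ctR]; exact hΓpsd.1
        have h2 : (c • Γ).IsHermitian := by
          rw [Matrix.IsHermitian, ctR, Matrix.transpose_smul, h3]
        exact hΓspsd.1.sub h2
      · intro v
        have hq : star v ⬝ᵥ (Γs - c • Γ) *ᵥ v = v ⬝ᵥ Γs *ᵥ v - c * (v ⬝ᵥ Γ *ᵥ v) := by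
          simp [star_trivial, Matrix.sub_mulVec, Matrix.smul_mulVec, dotProduct_sub,
            dotProduct_smul, smul_eq_mul]
        rw [hq, sub_nonneg]
        calc c * (v ⬝ᵥ Γ *ᵥ v) ≤ c * (opN Γ * (v ⬝ᵥ v)) :=
              mul_le_mul_of_nonneg_left (opN_quad Γ v) hc0
          _ = lamMin Γs * (v ⬝ᵥ v) := by
              rw [hc]; field_simp
          _ ≤ v ⬝ᵥ Γs *ᵥ v := lamMin_quad hΓspsd v
    -- decomposition Γ = Γs + exp(s•X) Γ exp(s•X)ᵀ
    have hdec : Γ = Γs + NormedSpace.exp (s • X) * Γ * (NormedSpace.exp (s • X))ᵀ := by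
      rw [tail_eq X Y₀ hint s, hΓ, hΓs]
      rw [← setIntegral_union (Set.Ioc_disjoint_Ioi le_rfl) measurableSet_Ioi hΓs_int
        (hint.mono_set (Set.Ioi_subset_Ioi hs)), Set.Ioc_union_Ioi_eq_Ioi hs]
    have hEst : NormedSpace.exp ((s + t) • X) =
        NormedSpace.exp (t • X) * NormedSpace.exp (s • X) := by
      rw [add_comm]; exact exp_smul_add X t s
    have hkey : (1 - c) •
          (NormedSpace.exp (t • X) * Γ * (NormedSpace.exp (t • X))ᵀ) -
        NormedSpace.exp ((s + t) • X) * Γ * (NormedSpace.exp ((s + t) • X))ᵀ =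
        NormedSpace.exp (t • X) * (Γs - c • Γ) * (NormedSpace.exp (t • X))ᵀ := by
      have hP : NormedSpace.exp (s • X) * Γ * (NormedSpace.exp (s • X))ᵀ = Γ - Γs := by
        rw [eq_sub_iff_add_eq, add_comm, ← hdec]
      rw [hEst, Matrix.transpose_mul]
      have : NormedSpace.exp (t • X) * NormedSpace.exp (s • X) * Γ *
          ((NormedSpace.exp (s • X))ᵀ * (NormedSpace.exp (t • X))ᵀ) =
          NormedSpace.exp (t • X) * (Γ - Γs) * (NormedSpace.exp (t • X))ᵀ := by
        rw [← hP]; simp [mul_assoc]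
      rw [this]
      simp only [Matrix.mul_sub, Matrix.sub_mul, Matrix.mul_smul, Matrix.smul_mul, sub_smul,
        one_smul, smul_sub]
      module
    rw [hΓ] at hkey ⊢
    rw [hkey]
    have := hinner.mul_mul_conjTranspose_same (NormedSpace.exp (t • X))
    rwa [ctR] at this
  · -- part (c)
    intro hPD
    intro μ hμ
    by_contra hre
    push_neg at hre
    have hdet : ((algebraMap ℂ (Matrix (Fin d) (Fin d) ℂ)) μ - X.map (algebraMap ℝ ℂ)).det = 0 := by
      have h1 : ¬IsUnit ((algebraMap ℂ (Matrix (Fin d) (Fin d) ℂ)) μ - X.map (algebraMap ℝ ℂ)) :=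
        spectrum.mem_iff.mp hμ
      by_contra hne
      exact h1 ((Matrix.isUnit_iff_isUnit_det _).mpr (isUnit_iff_ne_zero.mpr hne))
    have hdetT : ((algebraMap ℂ (Matrix (Fin d) (Fin d) ℂ)) μ - (X.map (algebraMap ℝ ℂ))ᵀ).det
        = 0 := by
      have heqT : (algebraMap ℂ (Matrix (Fin d) (Fin d) ℂ)) μ - (X.map (algebraMap ℝ ℂ))ᵀ
          = ((algebraMap ℂ (Matrix (Fin d) (Fin d) ℂ)) μ - X.map (algebraMap ℝ ℂ))ᵀ := by
        rw [Matrix.transpose_sub]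
        congr 1
        simp [Algebra.algebraMap_eq_smul_one]
      rw [heqT, Matrix.det_transpose]
      exact hdet
    obtain ⟨w, hw0, hww⟩ := (Matrix.exists_mulVec_eq_zero_iff).mpr hdetT
    have heig : (X.map (algebraMap ℝ ℂ))ᵀ *ᵥ w = μ • w := by
      rw [Matrix.sub_mulVec, Algebra.algebraMap_eq_smul_one, Matrix.smul_mulVec,
        Matrix.one_mulVec, sub_eq_zero] at hww
      exact hww.symm
    have hpt : ∀ x : ℝ, (fun i => (w i).re) ⬝ᵥ f x *ᵥ (fun i => (w i).re)
        + (fun i => (w i).im) ⬝ᵥ f x *ᵥ (fun i => (w i).im)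
        = Real.exp (2 * μ.re * x) * ((fun i => (w i).re) ⬝ᵥ Y₀ *ᵥ (fun i => (w i).re)
          + (fun i => (w i).im) ⬝ᵥ Y₀ *ᵥ (fun i => (w i).im)) :=
      fun x => phi_pointwise X Y₀ μ w heig x
    set a : Fin d → ℝ := fun i => (w i).re with ha
    set b : Fin d → ℝ := fun i => (w i).im with hb
    set cst : ℝ := a ⬝ᵥ Y₀ *ᵥ a + b ⬝ᵥ Y₀ *ᵥ b with hcst
    have hdot : ∀ v : Fin d → ℝ, v ⬝ᵥ Γ *ᵥ v = ∫ x in Set.Ioi (0:ℝ), v ⬝ᵥ f x *ᵥ v := by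
      intro v
      have := (ContinuousLinearMap.integral_comp_comm (dotCLM v) hint).symm
      exact this
    have hint_a : IntegrableOn (fun x => a ⬝ᵥ f x *ᵥ a) (Set.Ioi 0) :=
      (dotCLM a).integrable_comp hint
    have hint_b : IntegrableOn (fun x => b ⬝ᵥ f x *ᵥ b) (Set.Ioi 0) :=
      (dotCLM b).integrable_comp hint
    have hΓφ : a ⬝ᵥ Γ *ᵥ a + b ⬝ᵥ Γ *ᵥ b
        = ∫ x in Set.Ioi (0:ℝ), (a ⬝ᵥ f x *ᵥ a + b ⬝ᵥ f x *ᵥ b) := by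
      rw [hdot a, hdot b]
      exact (integral_add hint_a hint_b).symm
    have hpos : 0 < a ⬝ᵥ Γ *ᵥ a + b ⬝ᵥ Γ *ᵥ b := by
      have hab : a ≠ 0 ∨ b ≠ 0 := by
        by_contra hcon
        push_neg at hcon
        apply hw0
        funext i
        have h1 : a i = 0 := by rw [hcon.1]; rfl
        have h2 : b i = 0 := by rw [hcon.2]; rfl
        exact Complex.ext h1 h2
      have hsa : 0 ≤ a ⬝ᵥ Γ *ᵥ a := by simpa [star_trivial] using hPD.posSemidef.dotProduct_mulVec_nonneg a
      have hsb : 0 ≤ b ⬝ᵥ Γ *ᵥ b := by simpa [star_trivial] using hPD.posSemidef.dotProduct_mulVec_nonneg b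
      rcases hab with h | h
      · have := hPD.dotProduct_mulVec_pos h
        simp only [star_trivial] at this
        linarith
      · have := hPD.dotProduct_mulVec_pos h
        simp only [star_trivial] at this
        linarith
    rcases le_or_gt cst 0 with hcle | hcpos
    · have hle : (∫ x in Set.Ioi (0:ℝ), (a ⬝ᵥ f x *ᵥ a + b ⬝ᵥ f x *ᵥ b)) ≤ 0 := by
        refine setIntegral_nonpos measurableSet_Ioi fun x _ => ?_
        rw [hpt x]
        exact mul_nonpos_of_nonneg_of_nonpos (Real.exp_nonneg _) hcle
      rw [hΓφ] at hpos
      linarith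
    · have hint_g : IntegrableOn (fun x : ℝ => Real.exp (2 * μ.re * x) * cst) (Set.Ioi 0) := by
        have h0 : (fun x : ℝ => Real.exp (2 * μ.re * x) * cst)
            = fun x => a ⬝ᵥ f x *ᵥ a + b ⬝ᵥ f x *ᵥ b := funext fun x => (hpt x).symm
        rw [h0]
        exact hint_a.add hint_b
      have hconst : Integrable (fun _ : ℝ => cst) (volume.restrict (Set.Ioi 0)) := by
        refine Integrable.mono hint_g aestronglyMeasurable_const ?_
        refine (ae_restrict_iff' measurableSet_Ioi).mpr (ae_of_all _ fun x hx => ?_)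
        have hx0 : (0:ℝ) < x := hx
        have h1 : (1:ℝ) ≤ Real.exp (2 * μ.re * x) := by
          apply Real.one_le_exp
          exact mul_nonneg (by linarith) hx0.le
        have h2 : cst ≤ Real.exp (2 * μ.re * x) * cst := by nlinarith
        rw [Real.norm_eq_abs, Real.norm_eq_abs, abs_of_pos hcpos,
          abs_of_pos (by nlinarith)]
        exact h2
      rcases (integrable_const_iff).mp hconst with h | h
      · exact hcpos.ne' h
      · have h := h.measure_univ_lt_top
        rw [Measure.restrict_apply_univ, Real.volume_Ioi] at h
        exact (lt_irrefl _) h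
end

section
/- For natural numbers n and p, the function g(C, X) := tr(Cᵀ X⁻¹ C) is convex on the convex set {(C, X) ∈ ℝ^{n×p} × Sym(n) : X is positive definite}; that is, for all (C₁, X₁), (C₂, X₂) in this set and all θ ∈ [0,1], g(θC₁ + (1−θ)C₂, θX₁ + (1−θ)X₂) ≤ θ g(C₁, X₁) + (1−θ) g(C₂, X₂). -/
open Matrix

lemma psd_trace_nonneg {n : ℕ} {M : Matrix (Fin n) (Fin n) ℝ} (hM : M.PosSemidef) : 0 ≤ M.trace := by
  rw [Matrix.trace]
  apply Finset.sum_nonneg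
  intro i _
  exact hM.diag_nonneg

lemma psd_smul {n : ℕ} {a : ℝ} (ha : 0 ≤ a) {M : Matrix (Fin n) (Fin n) ℝ} (hM : M.PosSemidef) : (a • M).PosSemidef := by
  refine ⟨?_, fun x => ?_⟩
  · have h : Mᵀ = M := by simpa using hM.1.eq
    simp [Matrix.IsHermitian, conjTranspose_smul, h]
  · exact (hM.smul ha).2 x

lemma pd_add_psd {n : ℕ} {A B : Matrix (Fin n) (Fin n) ℝ} (hA : A.PosDef) (hB : B.PosSemidef) : (A + B).PosDef := by
  refine ⟨hA.1.add hB.1, fun x hx => ?_⟩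
  exact (hA.add_posSemidef hB).2 hx

lemma pd_smul {n : ℕ} {a : ℝ} (ha : 0 < a) {M : Matrix (Fin n) (Fin n) ℝ} (hM : M.PosDef) : (a • M).PosDef := by
  refine ⟨(psd_smul ha.le hM.posSemidef).1, fun x hx => ?_⟩
  exact (hM.smul ha).2 hx

lemma pd_combo {n : ℕ} {A B : Matrix (Fin n) (Fin n) ℝ} (hA : A.PosDef) (hB : B.PosDef)
    {a b : ℝ} (ha : 0 ≤ a) (hb : 0 ≤ b) (hab : a + b = 1) : (a • A + b • B).PosDef := by
  rcases ha.eq_or_lt with h | h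
  · have hb1 : b = 1 := by linarith
    simp [← h, hb1, hB]
  · exact pd_add_psd (pd_smul h hA) (psd_smul hb hB.posSemidef)

lemma key_ineq {n p : ℕ} {X : Matrix (Fin n) (Fin n) ℝ} (hX : X.PosDef)
    (C V : Matrix (Fin n) (Fin p) ℝ) :
    2 * (Vᵀ * C).trace - (Vᵀ * X * V).trace ≤ (Cᵀ * X⁻¹ * C).trace := by
  have hdet : IsUnit X.det := isUnit_iff_isUnit_det X |>.1 hX.isUnit
  have hXt : Xᵀ = X := by simpa using hX.1.eq
  have hinvT : X⁻¹ᵀ = X⁻¹ := by rw [transpose_nonsing_inv, hXt]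
  set W := X⁻¹ * C - V with hW
  have hpsd : (Wᵀ * X * W).PosSemidef := by
    have := hX.posSemidef.conjTranspose_mul_mul_same W
    simpa using this
  have htr := psd_trace_nonneg hpsd
  have hexp : Wᵀ * X * W = Cᵀ * X⁻¹ * C - Cᵀ * V - Vᵀ * C + Vᵀ * X * V := by
    have h1 : ∀ (B : Matrix (Fin n) (Fin p) ℝ), X * (X⁻¹ * B) = B :=
      fun B => mul_nonsing_inv_cancel_left X B hdet
    have h2 : ∀ (B : Matrix (Fin n) (Fin p) ℝ), X⁻¹ * (X * B) = B :=
      fun B => nonsing_inv_mul_cancel_left X B hdet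
    simp only [hW, transpose_sub, transpose_mul, hinvT, Matrix.sub_mul, Matrix.mul_sub,
      Matrix.mul_assoc, h1, h2]
    abel
  have htrT : (Cᵀ * V).trace = (Vᵀ * C).trace := by
    rw [← trace_transpose (Vᵀ * C), transpose_mul, transpose_transpose]
  rw [hexp, trace_add, trace_sub, trace_sub, htrT] at htr
  linarith

/-- The function `(C, X) ↦ tr(Cᵀ X⁻¹ C)` is convex on the convex set of
pairs whose second component is (symmetric) positive definite. -/
theorem stmt_18 (n p : ℕ) :
    ConvexOn ℝ
      {q : Matrix (Fin n) (Fin p) ℝ × Matrix (Fin n) (Fin n) ℝ | q.2.PosDef}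
      (fun q => Matrix.trace (q.1ᵀ * q.2⁻¹ * q.1)) := by
  constructor
  · intro q hq r hr a b ha hb hab
    exact pd_combo hq hr ha hb hab
  · rintro ⟨C₁, X₁⟩ h1 ⟨C₂, X₂⟩ h2 a b ha hb hab
    simp only [Set.mem_setOf_eq] at h1 h2
    simp only [Prod.smul_mk, Prod.mk_add_mk, smul_eq_mul]
    set X : Matrix (Fin n) (Fin n) ℝ := a • X₁ + b • X₂ with hXdef
    set C : Matrix (Fin n) (Fin p) ℝ := a • C₁ + b • C₂ with hCdef
    have hX : X.PosDef := pd_combo h1 h2 ha hb hab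
    have hdet : IsUnit X.det := isUnit_iff_isUnit_det X |>.1 hX.isUnit
    have hXt : Xᵀ = X := by simpa using hX.1.eq
    have hinvT : X⁻¹ᵀ = X⁻¹ := by rw [transpose_nonsing_inv, hXt]
    set V : Matrix (Fin n) (Fin p) ℝ := X⁻¹ * C with hV
    have hVt : Vᵀ = Cᵀ * X⁻¹ := by rw [hV, transpose_mul, hinvT]
    -- equality at the optimum
    have heq : (Cᵀ * X⁻¹ * C).trace = 2 * (Vᵀ * C).trace - (Vᵀ * X * V).trace := by
      have e1 : Vᵀ * C = Cᵀ * X⁻¹ * C := by rw [hVt]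
      have e2 : Vᵀ * X * V = Cᵀ * X⁻¹ * C := by
        rw [hVt, Matrix.mul_assoc (Cᵀ * X⁻¹) X V, hV,
          mul_nonsing_inv_cancel_left X C hdet]
      rw [e1, e2]; ring
    -- split the affine minorant
    have hsplit : 2 * (Vᵀ * C).trace - (Vᵀ * X * V).trace
        = a * (2 * (Vᵀ * C₁).trace - (Vᵀ * X₁ * V).trace)
          + b * (2 * (Vᵀ * C₂).trace - (Vᵀ * X₂ * V).trace) := by
      rw [hCdef, hXdef]
      simp only [Matrix.mul_add, Matrix.add_mul, Matrix.mul_smul, Matrix.smul_mul,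
        trace_add, trace_smul, smul_eq_mul]
      ring
    have k1 := key_ineq h1 C₁ V
    have k2 := key_ineq h2 C₂ V
    show (Cᵀ * X⁻¹ * C).trace ≤ a * (C₁ᵀ * X₁⁻¹ * C₁).trace + b * (C₂ᵀ * X₂⁻¹ * C₂).trace
    rw [heq, hsplit]
    exact add_le_add (mul_le_mul_of_nonneg_left k1 ha) (mul_le_mul_of_nonneg_left k2 hb)
end

section
/- For a natural number n, the set D := {(M₁, M₂) ∈ Sym(n) × Sym(n) : M₁ is positive definite and M₂ − M₁⁻¹ is positive definite} is convex, and the function h(M₁, M₂) := tr((M₂ − M₁⁻¹)⁻¹) is convex on D; that is, for all (M₁, M₂), (M₁', M₂') ∈ D and all θ ∈ [0,1], h(θM₁ + (1−θ)M₁', θM₂ + (1−θ)M₂') ≤ θ h(M₁, M₂) + (1−θ) h(M₁', M₂'). -/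
open Matrix

namespace Stmt19Aux

variable {n : ℕ}

local notation "Mat" => Matrix (Fin n) (Fin n) ℝ

lemma herm_iff (A : Mat) : A.IsHermitian ↔ Aᵀ = A := by
  rw [Matrix.IsHermitian, conjTranspose_eq_transpose_of_trivial]

lemma pd_dot {A : Mat} (h : A.PosDef) {x : Fin n → ℝ} (hx : x ≠ 0) :
    0 < x ⬝ᵥ A *ᵥ x := by simpa using (posDef_iff_dotProduct_mulVec.mp h).2 hx

lemma psd_dot {A : Mat} (h : A.PosSemidef) (x : Fin n → ℝ) :
    0 ≤ x ⬝ᵥ A *ᵥ x := by simpa using (posSemidef_iff_dotProduct_mulVec.mp h).2 x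

lemma trace_nonneg' {A : Mat} (h : A.PosSemidef) : 0 ≤ A.trace := by
  rw [Matrix.trace]
  apply Finset.sum_nonneg
  intro i _
  have := psd_dot h (Pi.single i 1)
  simpa [Matrix.diag] using this

lemma mul_inv {A : Mat} (hA : A.PosDef) : A * A⁻¹ = 1 :=
  Matrix.mul_nonsing_inv A hA.det_pos.ne'.isUnit

lemma inv_mul {A : Mat} (hA : A.PosDef) : A⁻¹ * A = 1 :=
  Matrix.nonsing_inv_mul A hA.det_pos.ne'.isUnit

lemma inv_transpose {A : Mat} (hA : A.PosDef) : (A⁻¹)ᵀ = A⁻¹ := by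
  rw [Matrix.transpose_nonsing_inv, (herm_iff A).mp hA.1]

/-- The key scalar inequality, vector form: `2⟨z,x⟩ - ⟨z,Az⟩ ≤ ⟨x,A⁻¹x⟩`. -/
lemma vec_key {A : Mat} (hA : A.PosDef) (x z : Fin n → ℝ) :
    2 * (z ⬝ᵥ x) - z ⬝ᵥ A *ᵥ z ≤ x ⬝ᵥ A⁻¹ *ᵥ x := by
  set y := A⁻¹ *ᵥ x with hy
  have hAy : A *ᵥ y = x := by
    rw [hy, Matrix.mulVec_mulVec, mul_inv hA, Matrix.one_mulVec]
  have h0 : 0 ≤ (z - y) ⬝ᵥ A *ᵥ (z - y) := psd_dot hA.posSemidef _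
  have hsym : y ⬝ᵥ A *ᵥ z = z ⬝ᵥ A *ᵥ y := by
    rw [Matrix.dotProduct_mulVec, ← Matrix.mulVec_transpose,
      (herm_iff A).mp hA.1, dotProduct_comm]
  have hyx : y ⬝ᵥ x = x ⬝ᵥ A⁻¹ *ᵥ x := by rw [hy, dotProduct_comm]
  rw [Matrix.mulVec_sub, sub_dotProduct,
    dotProduct_sub, dotProduct_sub, hsym, hAy, hyx] at h0
  linarith

lemma posDef_combo {A A' : Mat} (hA : A.PosDef) (hA' : A'.PosDef) {a b : ℝ}
    (ha : 0 ≤ a) (hb : 0 ≤ b) (hab : a + b = 1) : (a • A + b • A').PosDef := by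
  refine posDef_iff_dotProduct_mulVec.mpr ⟨(herm_iff _).mpr ?_, fun x hx => ?_⟩
  · rw [Matrix.transpose_add, Matrix.transpose_smul, Matrix.transpose_smul,
      (herm_iff A).mp hA.1, (herm_iff A').mp hA'.1]
  · have h1 := pd_dot hA hx
    have h2 := pd_dot hA' hx
    have e : x ⬝ᵥ (a • A + b • A') *ᵥ x
        = a * (x ⬝ᵥ A *ᵥ x) + b * (x ⬝ᵥ A' *ᵥ x) := by
      simp [Matrix.add_mulVec, Matrix.smul_mulVec]
    rw [show (star x : Fin n → ℝ) = x from rfl, e]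
    rcases ha.lt_or_eq with ha' | ha'
    · have hb2 : 0 ≤ b * (x ⬝ᵥ A' *ᵥ x) := mul_nonneg hb h2.le
      nlinarith
    · have hb1 : b = 1 := by linarith
      rw [← ha', hb1]; simpa using h2

/-- Convexity of the quadratic form of the inverse. -/
lemma inv_qf_combo {A A' : Mat} (hA : A.PosDef) (hA' : A'.PosDef) {a b : ℝ}
    (ha : 0 ≤ a) (hb : 0 ≤ b) (hab : a + b = 1) (x : Fin n → ℝ) :
    x ⬝ᵥ (a • A + b • A')⁻¹ *ᵥ x
      ≤ a * (x ⬝ᵥ A⁻¹ *ᵥ x) + b * (x ⬝ᵥ A'⁻¹ *ᵥ x) := by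
  have hAc : (a • A + b • A').PosDef := posDef_combo hA hA' ha hb hab
  set Ac := a • A + b • A' with hAcdef
  set z := Ac⁻¹ *ᵥ x with hz
  have hAz : Ac *ᵥ z = x := by
    rw [hz, Matrix.mulVec_mulVec, mul_inv hAc, Matrix.one_mulVec]
  have e1 : x ⬝ᵥ Ac⁻¹ *ᵥ x = 2 * (z ⬝ᵥ x) - z ⬝ᵥ Ac *ᵥ z := by
    rw [hAz, ← hz, dotProduct_comm]; ring
  have e2 : z ⬝ᵥ Ac *ᵥ z = a * (z ⬝ᵥ A *ᵥ z) + b * (z ⬝ᵥ A' *ᵥ z) := by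
    rw [hAcdef]; simp [Matrix.add_mulVec, Matrix.smul_mulVec]
  have k1' := mul_le_mul_of_nonneg_left (vec_key hA x z) ha
  have k2' := mul_le_mul_of_nonneg_left (vec_key hA' x z) hb
  rw [e1, e2]
  have hsum := add_le_add k1' k2'
  have expand : a * (2 * (z ⬝ᵥ x) - z ⬝ᵥ A *ᵥ z) + b * (2 * (z ⬝ᵥ x) - z ⬝ᵥ A' *ᵥ z)
      = 2 * (z ⬝ᵥ x) - (a * (z ⬝ᵥ A *ᵥ z) + b * (z ⬝ᵥ A' *ᵥ z)) := by
    linear_combination (2 * (z ⬝ᵥ x)) * hab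
  linarith

/-- Trace form of the completion of squares: `2 tr(ZᵀY) - tr(ZᵀAZ) ≤ tr(Yᵀ A⁻¹ Y)`. -/
lemma trace_key {A : Mat} (hA : A.PosDef) (Y Z : Mat) :
    2 * (Zᵀ * Y).trace - (Zᵀ * A * Z).trace ≤ (Yᵀ * A⁻¹ * Y).trace := by
  rw [Matrix.mul_assoc Zᵀ A Z, Matrix.mul_assoc Yᵀ A⁻¹ Y]
  set W := Z - A⁻¹ * Y with hW
  have hpsd : (Wᵀ * A * W).PosSemidef := by
    have := hA.posSemidef.conjTranspose_mul_mul_same W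
    rwa [conjTranspose_eq_transpose_of_trivial] at this
  have h0 : 0 ≤ (Wᵀ * A * W).trace := trace_nonneg' hpsd
  have e1 : Wᵀ * A * W
      = Zᵀ * (A * Z) - Zᵀ * Y - Yᵀ * Z + Yᵀ * (A⁻¹ * Y) := by
    have h1 : Zᵀ * (A * (A⁻¹ * Y)) = Zᵀ * Y := by
      rw [← Matrix.mul_assoc A, mul_inv hA, Matrix.one_mul]
    have h2 : Yᵀ * (A⁻¹ * (A * Z)) = Yᵀ * Z := by
      rw [← Matrix.mul_assoc A⁻¹, inv_mul hA, Matrix.one_mul]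
    have h3 : Yᵀ * (A⁻¹ * (A * (A⁻¹ * Y))) = Yᵀ * (A⁻¹ * Y) := by
      rw [← Matrix.mul_assoc A⁻¹, inv_mul hA, Matrix.one_mul]
    rw [hW, Matrix.transpose_sub, Matrix.transpose_mul, inv_transpose hA]
    simp only [Matrix.sub_mul, Matrix.mul_sub, Matrix.mul_assoc, h1, h2, h3]
    abel
  have e2 : (Yᵀ * Z).trace = (Zᵀ * Y).trace := by
    rw [← Matrix.trace_transpose (Yᵀ * Z), Matrix.transpose_mul,
      Matrix.transpose_transpose]
  rw [e1, Matrix.trace_add, Matrix.trace_sub, Matrix.trace_sub, e2] at h0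
  linarith

/-- Variational upper bound on the set. -/
lemma g_le {A B : Mat} (hA : A.PosDef) (hS : (B - A⁻¹).PosDef) (Y Z : Mat) :
    2 * Y.trace - (Yᵀ * B * Y).trace + (2 * (Zᵀ * Y).trace - (Zᵀ * A * Z).trace)
      ≤ ((B - A⁻¹)⁻¹).trace := by
  have h1 := trace_key hA Y Z
  have h2 := trace_key hS (1 : Mat) Y
  simp only [Matrix.mul_one, Matrix.transpose_one, Matrix.one_mul,
    Matrix.trace_transpose] at h2
  have e : (Yᵀ * (B - A⁻¹) * Y).trace
      = (Yᵀ * B * Y).trace - (Yᵀ * A⁻¹ * Y).trace := by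
    rw [Matrix.mul_sub, Matrix.sub_mul, Matrix.trace_sub]
  rw [e] at h2
  linarith

lemma posDef_S_combo {A A' B B' : Mat} (hA : A.PosDef) (hS : (B - A⁻¹).PosDef)
    (hA' : A'.PosDef) (hS' : (B' - A'⁻¹).PosDef) {a b : ℝ}
    (ha : 0 ≤ a) (hb : 0 ≤ b) (hab : a + b = 1) :
    ((a • B + b • B') - (a • A + b • A')⁻¹).PosDef := by
  have hAc : (a • A + b • A').PosDef := posDef_combo hA hA' ha hb hab
  have hB : B.IsHermitian := by
    have := hS.1.add hA.1.inv
    rwa [sub_add_cancel] at this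
  have hB' : B'.IsHermitian := by
    have := hS'.1.add hA'.1.inv
    rwa [sub_add_cancel] at this
  refine posDef_iff_dotProduct_mulVec.mpr ⟨Matrix.IsHermitian.sub ((herm_iff _).mpr ?_) hAc.1.inv, fun x hx => ?_⟩
  · rw [Matrix.transpose_add, Matrix.transpose_smul, Matrix.transpose_smul,
      (herm_iff B).mp hB, (herm_iff B').mp hB']
  · have key := inv_qf_combo hA hA' ha hb hab x
    have e0 : x ⬝ᵥ (a • B + b • B') *ᵥ x
        = a * (x ⬝ᵥ B *ᵥ x) + b * (x ⬝ᵥ B' *ᵥ x) := by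
      simp [Matrix.add_mulVec, Matrix.smul_mulVec]
    have hq : x ⬝ᵥ ((a • B + b • B') - (a • A + b • A')⁻¹) *ᵥ x
        = (a * (x ⬝ᵥ B *ᵥ x) + b * (x ⬝ᵥ B' *ᵥ x))
          - x ⬝ᵥ (a • A + b • A')⁻¹ *ᵥ x := by
      rw [Matrix.sub_mulVec, dotProduct_sub, e0]
    have h1 := pd_dot hS hx
    have h2 := pd_dot hS' hx
    rw [Matrix.sub_mulVec, dotProduct_sub] at h1 h2
    rw [show (star x : Fin n → ℝ) = x from rfl, hq]
    rcases ha.lt_or_eq with ha' | ha'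
    · have hp1 : 0 < a * (x ⬝ᵥ B *ᵥ x - x ⬝ᵥ A⁻¹ *ᵥ x) := mul_pos ha' h1
      have hp2 : 0 ≤ b * (x ⬝ᵥ B' *ᵥ x - x ⬝ᵥ A'⁻¹ *ᵥ x) := mul_nonneg hb h2.le
      nlinarith
    · have hb1 : b = 1 := by linarith
      rw [← ha', hb1] at key ⊢
      simp only [zero_mul, one_mul, zero_add] at key ⊢
      linarith

end Stmt19Aux

open Stmt19Aux in
/-- The set of pairs `(M₁, M₂)` of symmetric matrices with `M₁ ≻ 0` and
`M₂ − M₁⁻¹ ≻ 0` is convex, and `(M₁, M₂) ↦ tr((M₂ − M₁⁻¹)⁻¹)` is convex on it. -/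
theorem stmt_19 (n : ℕ) :
    ConvexOn ℝ
      {q : Matrix (Fin n) (Fin n) ℝ × Matrix (Fin n) (Fin n) ℝ |
        q.1.PosDef ∧ (q.2 - q.1⁻¹).PosDef}
      (fun q => Matrix.trace ((q.2 - q.1⁻¹)⁻¹)) := by
  constructor
  · intro p hp q hq a b ha hb hab
    obtain ⟨hA, hS⟩ := hp
    obtain ⟨hA', hS'⟩ := hq
    refine ⟨?_, ?_⟩
    · exact posDef_combo hA hA' ha hb hab
    · exact posDef_S_combo hA hS hA' hS' ha hb hab
  · intro p hp q hq a b ha hb hab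
    obtain ⟨hA, hS⟩ := hp
    obtain ⟨hA', hS'⟩ := hq
    simp only [smul_eq_mul]
    show (((a • p + b • q).2 - (a • p + b • q).1⁻¹)⁻¹).trace
      ≤ a * ((p.2 - p.1⁻¹)⁻¹).trace + b * ((q.2 - q.1⁻¹)⁻¹).trace
    have hfst : (a • p + b • q).1 = a • p.1 + b • q.1 := rfl
    have hsnd : (a • p + b • q).2 = a • p.2 + b • q.2 := rfl
    rw [hfst, hsnd]
    set A := p.1
    set B := p.2
    set A' := q.1
    set B' := q.2
    have hAc : (a • A + b • A').PosDef := posDef_combo hA hA' ha hb hab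
    have hSc : ((a • B + b • B') - (a • A + b • A')⁻¹).PosDef :=
      posDef_S_combo hA hS hA' hS' ha hb hab
    set Ac := a • A + b • A' with hAcdef
    set Bc := a • B + b • B' with hBcdef
    set Sc := Bc - Ac⁻¹ with hScdef
    set Y := Sc⁻¹ with hYdef
    set Z := Ac⁻¹ * Y with hZdef
    have hYT : Yᵀ = Y := by rw [hYdef]; exact inv_transpose hSc
    have c1 : Zᵀ * Y = Yᵀ * Ac⁻¹ * Y := by
      rw [hZdef, Matrix.transpose_mul, inv_transpose hAc]
    have c2 : Zᵀ * Ac * Z = Yᵀ * Ac⁻¹ * Y := by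
      rw [hZdef, Matrix.transpose_mul, inv_transpose hAc,
        Matrix.mul_assoc (Yᵀ * Ac⁻¹) Ac, ← Matrix.mul_assoc Ac, mul_inv hAc,
        Matrix.one_mul]
    have c3 : Yᵀ * Sc * Y = Y := by
      rw [hYT, hYdef, inv_mul hSc, Matrix.one_mul]
    have c4 : Yᵀ * Bc * Y = Yᵀ * Sc * Y + Yᵀ * Ac⁻¹ * Y := by
      rw [hScdef, Matrix.mul_sub, Matrix.sub_mul, sub_add_cancel]
    have claim2 : (Sc⁻¹).trace
        = 2 * Y.trace - (Yᵀ * Bc * Y).trace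
          + (2 * (Zᵀ * Y).trace - (Zᵀ * Ac * Z).trace) := by
      rw [c1, c2, c4, Matrix.trace_add, c3, ← hYdef]; ring
    have lB : (Yᵀ * Bc * Y).trace
        = a * (Yᵀ * B * Y).trace + b * (Yᵀ * B' * Y).trace := by
      rw [hBcdef]
      simp [Matrix.mul_add, Matrix.add_mul, Matrix.mul_smul, Matrix.smul_mul,
        Matrix.trace_add, Matrix.trace_smul, smul_eq_mul]
    have lA : (Zᵀ * Ac * Z).trace
        = a * (Zᵀ * A * Z).trace + b * (Zᵀ * A' * Z).trace := by
      rw [hAcdef]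
      simp [Matrix.mul_add, Matrix.add_mul, Matrix.mul_smul, Matrix.smul_mul,
        Matrix.trace_add, Matrix.trace_smul, smul_eq_mul]
    have gle1 := g_le hA hS Y Z
    have gle2 := g_le hA' hS' Y Z
    have m1 := mul_le_mul_of_nonneg_left gle1 ha
    have m2 := mul_le_mul_of_nonneg_left gle2 hb
    have hb' : b = 1 - a := by linarith
    rw [hb'] at lB lA m2 ⊢
    linarith [claim2]
end
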